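/- arXiv:2603.26893 — 5 statements merged into one kernel-verified Lean document; each statement's English description precedes it below -/
import Mathlib

section
/- For every request sequence E = ((N_t, q_t))_{t∈[m]} with n offline nodes, the set Δ(E) of feasible load vectors contains a unique majorization-minimal element ℓ*: ℓ* ⪯ ℓ for every ℓ ∈ Δ(E). Consequently, ℓ* ∈ argmax_{ℓ∈Δ(E)} f(ℓ) for every Schur-concave f : ℝ^n_{≥0} → ℝ_{≥0} and ℓ* ∈ argmin_{ℓ∈Δ(E)} g(ℓ) for every Schur-convex g : ℝ^n_{≥0} → ℝ_{≥0}. -/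
open Finset MeasureTheory

/-- A request sequence with `n` offline nodes and `m` online nodes: each online
node `t` has a nonempty neighborhood `N t ⊆ [n]` and a positive quantity `q t`. -/
structure ReqSeq (n m : ℕ) where
  N : Fin m → Finset (Fin n)
  q : Fin m → ℝ
  N_nonempty : ∀ t, (N t).Nonempty
  q_pos : ∀ t, 0 < q t

/-- `Δ(N, q)`: feasible allocations for a single online node. -/
def allocSet (n : ℕ) (N : Finset (Fin n)) (qt : ℝ) : Set (Fin n → ℝ) :=
  {x | (∀ i, 0 ≤ x i) ∧ (∀ i, i ∉ N → x i = 0) ∧ ∑ i, x i = qt}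

/-- A feasible allocation trajectory on a request sequence. -/
def Feasible {n m : ℕ} (E : ReqSeq n m) (x : Fin m → Fin n → ℝ) : Prop :=
  ∀ t, x t ∈ allocSet n (E.N t) (E.q t)

/-- `Δ(E)`: the Minkowski sum of the per-node allocation sets (feasible load vectors). -/
def loads {n m : ℕ} (E : ReqSeq n m) : Set (Fin n → ℝ) :=
  {ℓ | ∃ x, Feasible E x ∧ ℓ = ∑ t, x t}

/-- Sum of the `k` largest entries of `x`. -/
noncomputable def topSum {n : ℕ} (x : Fin n → ℝ) (k : ℕ) : ℝ :=
  sSup ((fun s : Finset (Fin n) => ∑ i ∈ s, x i) '' {s | s.card = k})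

/-- `Majorizes x y` means `x ⪰ y`: equal total sums and every `k`-largest-entries
sum of `x` dominates that of `y`. -/
def Majorizes {n : ℕ} (x y : Fin n → ℝ) : Prop :=
  (∑ i, x i = ∑ i, y i) ∧ ∀ k ≤ n, topSum y k ≤ topSum x k

/-- `f` is Schur-concave on the nonnegative orthant: `x ⪯ y → f x ≥ f y`. -/
def SchurConcave {n : ℕ} (f : (Fin n → ℝ) → ℝ) : Prop :=
  ∀ x y : Fin n → ℝ, (∀ i, 0 ≤ x i) → (∀ i, 0 ≤ y i) → Majorizes y x → f y ≤ f x

/-- `g` is Schur-convex on the nonnegative orthant: `x ⪯ y → g x ≤ g y`. -/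
def SchurConvex {n : ℕ} (g : (Fin n → ℝ) → ℝ) : Prop :=
  ∀ x y : Fin n → ℝ, (∀ i, 0 ≤ x i) → (∀ i, 0 ≤ y i) → Majorizes y x → g x ≤ g y

/-- Cumulative load strictly before online node `t`. -/
def prevLoad {n m : ℕ} (x : Fin m → Fin n → ℝ) (t : Fin m) : Fin n → ℝ :=
  fun i => ∑ s ∈ Finset.univ.filter (fun s => s < t), x s i

/-- Minimum of `v` over the neighborhood of online node `t`. -/
noncomputable def reqMinOn {n m : ℕ} (E : ReqSeq n m) (t : Fin m) (v : Fin n → ℝ) : ℝ :=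
  (E.N t).inf' (E.N_nonempty t) v

/-- `x` is the water-filling allocation trajectory on `E`: at each arrival `t`,
`x t` maximizes the minimum post-allocation load over `N t`. -/
def IsWFAlloc {n m : ℕ} (E : ReqSeq n m) (x : Fin m → Fin n → ℝ) : Prop :=
  Feasible E x ∧
  ∀ t, ∀ y ∈ allocSet n (E.N t) (E.q t),
    reqMinOn E t (fun i => y i + prevLoad x t i) ≤ reqMinOn E t (fun i => x t i + prevLoad x t i)

-- The load vector produced by water-filling (via choice; the trajectory exists and is unique).
open Classical in
noncomputable def wfLoad {n m : ℕ} (E : ReqSeq n m) : Fin n → ℝ :=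
  if h : ∃ x, IsWFAlloc E x then ∑ t, h.choose t else 0

/-- `ℓ` is the majorization-minimal element of `Δ(E)`. -/
def IsOpt {n m : ℕ} (E : ReqSeq n m) (ℓ : Fin n → ℝ) : Prop :=
  ℓ ∈ loads E ∧ ∀ ℓ' ∈ loads E, Majorizes ℓ' ℓ

-- `OPT(E)`, the majorization-minimal feasible load vector (via choice).
open Classical in
noncomputable def optLoad {n m : ℕ} (E : ReqSeq n m) : Fin n → ℝ :=
  if h : ∃ ℓ, IsOpt E ℓ then h.choose else 0

/-- A request sequence is nested if `N 1 ⊇ N 2 ⊇ ⋯ ⊇ N m`. -/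
def IsNested {n m : ℕ} (E : ReqSeq n m) : Prop :=
  ∀ s t : Fin m, s ≤ t → E.N t ⊆ E.N s

/-- `E_{n,m,q}`: request sequences with total quantity `q`. -/
def seqs (n m : ℕ) (q : ℝ) : Set (ReqSeq n m) := {E | ∑ t, E.q t = q}

/-- The harmonic-series matrix applied to a vector: `(Hℓ)(i) = Σ_{j ≤ i} ℓ(j)/(n − j + 1)`
(in 1-indexed notation). -/
noncomputable def Hvec (n : ℕ) (ℓ : Fin n → ℝ) : Fin n → ℝ :=
  fun i => ∑ j ∈ Finset.univ.filter (fun j => j ≤ i), ℓ j / ((n - (j : ℕ) : ℕ) : ℝ)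

/-- The water-filling height of online node `t`: the common post-allocation load of
the offline nodes in the support of `x t`. -/
noncomputable def height {n m : ℕ} (x : Fin m → Fin n → ℝ) (t : Fin m) : ℝ :=
  sSup {c | ∃ i, 0 < x t i ∧ c = x t i + prevLoad x t i}


section TopSum
variable {n : ℕ}

lemma sum_le_topSum (x : Fin n → ℝ) {S : Finset (Fin n)} {k : ℕ} (h : S.card = k) :
    ∑ i ∈ S, x i ≤ topSum x k :=
  le_csSup ((Set.toFinite _).bddAbove) ⟨S, h, rfl⟩

lemma topSum_le {x : Fin n → ℝ} {k : ℕ} (hk : k ≤ n) {c : ℝ}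
    (h : ∀ S : Finset (Fin n), S.card = k → ∑ i ∈ S, x i ≤ c) : topSum x k ≤ c := by
  obtain ⟨S, -, hS⟩ := Finset.exists_subset_card_eq
    (show k ≤ (Finset.univ : Finset (Fin n)).card by simpa using hk)
  exact csSup_le ⟨_, ⟨S, hS, rfl⟩⟩ (by rintro r ⟨T, hT, rfl⟩; exact h T hT)

end TopSum

section Loads
variable {n m : ℕ} {E : ReqSeq n m}

lemma loads_nonempty (E : ReqSeq n m) : (loads E).Nonempty := by
  classical
  refine ⟨_, fun t i => if i = (E.N_nonempty t).choose then E.q t else 0, fun t => ⟨?_, ?_, ?_⟩, rfl⟩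
  · intro i; dsimp only; split
    · exact (E.q_pos t).le
    · exact le_refl 0
  · intro i hi; dsimp only; split
    · rename_i h; exact absurd (h ▸ (E.N_nonempty t).choose_spec) hi
    · rfl
  · simp

lemma loads_sum {ℓ : Fin n → ℝ} (h : ℓ ∈ loads E) : ∑ i, ℓ i = ∑ t, E.q t := by
  obtain ⟨x, hx, rfl⟩ := h
  simp only [Finset.sum_apply]
  rw [Finset.sum_comm]
  exact Finset.sum_congr rfl fun t _ => (hx t).2.2

lemma loads_nonneg {ℓ : Fin n → ℝ} (h : ℓ ∈ loads E) : ∀ i, 0 ≤ ℓ i := by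
  obtain ⟨x, hx, rfl⟩ := h
  intro i
  simp only [Finset.sum_apply]
  exact Finset.sum_nonneg fun t _ => (hx t).1 i

lemma loads_combo {ℓ ℓ' : Fin n → ℝ} (h : ℓ ∈ loads E) (h' : ℓ' ∈ loads E) {a b : ℝ}
    (ha : 0 ≤ a) (hb : 0 ≤ b) (hab : a + b = 1) :
    (fun i => a * ℓ i + b * ℓ' i) ∈ loads E := by
  obtain ⟨x, hx, rfl⟩ := h
  obtain ⟨y, hy, rfl⟩ := h'
  refine ⟨fun t i => a * x t i + b * y t i, fun t => ⟨?_, ?_, ?_⟩, ?_⟩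
  · intro i; dsimp only; have := (hx t).1 i; have := (hy t).1 i; positivity
  · intro i hi; dsimp only; rw [(hx t).2.1 i hi, (hy t).2.1 i hi]; ring
  · dsimp only
    rw [Finset.sum_add_distrib, ← Finset.mul_sum, ← Finset.mul_sum, (hx t).2.2, (hy t).2.2]
    linear_combination hab * E.q t
  · funext i; simp [Finset.sum_apply, Finset.mul_sum, Finset.sum_add_distrib]

lemma allocSet_isClosed (N : Finset (Fin n)) (qt : ℝ) : IsClosed (allocSet n N qt) := by
  have h1 : IsClosed {v : Fin n → ℝ | ∀ i, 0 ≤ v i} := by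
    have : {v : Fin n → ℝ | ∀ i, 0 ≤ v i} = ⋂ i, {v | 0 ≤ v i} := by ext; simp
    rw [this]
    exact isClosed_iInter fun i => isClosed_le continuous_const (continuous_apply i)
  have h2 : IsClosed {v : Fin n → ℝ | ∀ i, i ∉ N → v i = 0} := by
    have : {v : Fin n → ℝ | ∀ i, i ∉ N → v i = 0} = ⋂ (i) (_ : i ∉ N), {v | v i = 0} := by
      ext; simp
    rw [this]
    exact isClosed_iInter fun i => isClosed_iInter fun _ =>
      isClosed_eq (continuous_apply i) continuous_const
  have h3 : IsClosed {v : Fin n → ℝ | ∑ i, v i = qt} :=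
    isClosed_eq (continuous_finset_sum _ fun i _ => continuous_apply i) continuous_const
  have : allocSet n N qt = {v : Fin n → ℝ | ∀ i, 0 ≤ v i} ∩
      ({v | ∀ i, i ∉ N → v i = 0} ∩ {v | ∑ i, v i = qt}) := by
    ext v; simp [allocSet, and_assoc]
  rw [this]
  exact h1.inter (h2.inter h3)

lemma loads_isCompact (E : ReqSeq n m) : IsCompact (loads E) := by
  have hT : IsCompact {x : Fin m → Fin n → ℝ | Feasible E x} := by
    apply Metric.isCompact_of_isClosed_isBounded
    · have : {x : Fin m → Fin n → ℝ | Feasible E x} =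
          ⋂ t, (fun x : Fin m → Fin n → ℝ => x t) ⁻¹' allocSet n (E.N t) (E.q t) := by
        ext x; simp [Feasible]
      rw [this]
      exact isClosed_iInter fun t => (allocSet_isClosed _ _).preimage (continuous_apply t)
    · rw [isBounded_iff_forall_norm_le]
      refine ⟨∑ t, E.q t, ?_⟩
      intro x hx
      have hC : (0:ℝ) ≤ ∑ t, E.q t := Finset.sum_nonneg fun t _ => (E.q_pos t).le
      rw [pi_norm_le_iff_of_nonneg hC]
      intro t
      rw [pi_norm_le_iff_of_nonneg hC]
      intro i
      have h1 : 0 ≤ x t i := (hx t).1 i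
      have h2 : x t i ≤ E.q t := by
        rw [← (hx t).2.2]
        exact Finset.single_le_sum (fun j _ => (hx t).1 j) (mem_univ i)
      have h3 : E.q t ≤ ∑ t', E.q t' :=
        Finset.single_le_sum (fun t' _ => (E.q_pos t').le) (mem_univ t)
      rw [Real.norm_eq_abs, abs_of_nonneg h1]
      linarith
  have : loads E = (fun x : Fin m → Fin n → ℝ => ∑ t, x t) '' {x | Feasible E x} := by
    ext ℓ
    constructor
    · rintro ⟨x, hx, rfl⟩; exact ⟨x, hx, rfl⟩
    · rintro ⟨x, hx, rfl⟩; exact ⟨x, hx, rfl⟩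
  rw [this]
  exact hT.image (continuous_finset_sum _ fun t _ => continuous_apply t)

end Loads

section Exchange
variable {n m : ℕ}

inductive Reach (E : ReqSeq n m) (x y : Fin m → Fin n → ℝ) (i : Fin n) : Fin n → Prop
  | base : Reach E x y i i
  | step {a b : Fin n} {t : Fin m} : Reach E x y i a → y t a < x t a → b ∈ E.N t →
      Reach E x y i b

lemma reach_exists_neg {E : ReqSeq n m} {x y : Fin m → Fin n → ℝ}
    (hx : Feasible E x) (hy : Feasible E y) {i : Fin n}
    (hi : ∑ t, y t i < ∑ t, x t i) :
    ∃ j, Reach E x y i j ∧ ∑ t, x t j < ∑ t, y t j := by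
  classical
  by_contra hcon
  push_neg at hcon
  set R : Finset (Fin n) := univ.filter (fun j => Reach E x y i j) with hR
  have hiR : i ∈ R := by simp [hR]; exact Reach.base
  have hpos : 0 < ∑ j ∈ R, (∑ t, x t j - ∑ t, y t j) := by
    apply Finset.sum_pos'
    · intro j hj
      simp only [hR, mem_filter, mem_univ, true_and] at hj
      have := hcon j hj
      linarith
    · exact ⟨i, hiR, by linarith⟩
  have hswap : ∑ j ∈ R, (∑ t, x t j - ∑ t, y t j) = ∑ t, ∑ j ∈ R, (x t j - y t j) := by
    rw [Finset.sum_comm]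
    exact Finset.sum_congr rfl fun j _ => (Finset.sum_sub_distrib _ _).symm
  have hle : ∀ t, ∑ j ∈ R, (x t j - y t j) ≤ 0 := by
    intro t
    by_cases hact : ∃ a ∈ R, y t a < x t a
    · obtain ⟨a, haR, ha⟩ := hact
      simp only [hR, mem_filter, mem_univ, true_and] at haR
      have hNR : ∀ b ∈ E.N t, b ∈ R := fun b hb => by
        simp only [hR, mem_filter, mem_univ, true_and]
        exact Reach.step haR ha hb
      have hx0 : ∑ j ∈ R, x t j = E.q t := by
        rw [← (hx t).2.2]
        apply Finset.sum_subset (subset_univ R)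
        intro j _ hjR
        exact (hx t).2.1 j fun hjN => hjR (hNR j hjN)
      have hy0 : ∑ j ∈ R, y t j = E.q t := by
        rw [← (hy t).2.2]
        apply Finset.sum_subset (subset_univ R)
        intro j _ hjR
        exact (hy t).2.1 j fun hjN => hjR (hNR j hjN)
      rw [Finset.sum_sub_distrib, hx0, hy0]
      simp
    · push_neg at hact
      rw [Finset.sum_sub_distrib]
      have : ∑ j ∈ R, x t j ≤ ∑ j ∈ R, y t j := Finset.sum_le_sum fun j hj => hact j hj
      linarith
  have hfin : ∑ t, ∑ j ∈ R, (x t j - y t j) ≤ 0 := Finset.sum_nonpos fun t _ => hle t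
  rw [hswap] at hpos
  linarith

lemma reach_move {E : ReqSeq n m} {x y : Fin m → Fin n → ℝ}
    (hx : Feasible E x) (hy : Feasible E y) {i j : Fin n} (h : Reach E x y i j) :
    ∃ ε : ℝ, 0 < ε ∧ ∃ x' : Fin m → Fin n → ℝ, Feasible E x' ∧
      (∀ t c, y t c < x t c → y t c < x' t c) ∧
      (∀ c, ∑ t, x' t c
        = ∑ t, x t c + ε * ((if c = j then (1:ℝ) else 0) - (if c = i then 1 else 0))) := by
  induction h with
  | base => exact ⟨1, one_pos, x, hx, fun _ _ h => h, fun c => by ring⟩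
  | @step a b t hreach hlt hbN ih =>
    obtain ⟨ε, hε, x', hx', hinv, hload⟩ := ih
    have hx'a : y t a < x' t a := hinv t a hlt
    set μ := min (x t a) (x' t a) with hμdef
    have hμ : y t a < μ := lt_min hlt hx'a
    have hya : 0 ≤ y t a := (hy t).1 a
    set ε' := min ε ((μ - y t a) / 2) with hε'def
    have hε'pos : 0 < ε' := lt_min hε (by linarith)
    have hε'le : ε' ≤ ε := min_le_left _ _
    have hε'half : ε' ≤ (μ - y t a) / 2 := min_le_right _ _
    set θ := ε' / ε with hθdef
    have hθ0 : 0 ≤ θ := div_nonneg hε'pos.le hε.le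
    have hθ1 : θ ≤ 1 := (div_le_one hε).mpr hε'le
    have hθε : θ * ε = ε' := div_mul_cancel₀ _ hε.ne'
    set x2 : Fin m → Fin n → ℝ := fun s c => (1 - θ) * x s c + θ * x' s c with hx2def
    have hx2f : Feasible E x2 := by
      intro s
      refine ⟨?_, ?_, ?_⟩
      · intro c; simp only [hx2def]
        exact add_nonneg (mul_nonneg (by linarith) ((hx s).1 c)) (mul_nonneg hθ0 ((hx' s).1 c))
      · intro c hc; simp only [hx2def]
        rw [(hx s).2.1 c hc, (hx' s).2.1 c hc]; ring
      · simp only [hx2def]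
        rw [Finset.sum_add_distrib, ← Finset.mul_sum, ← Finset.mul_sum, (hx s).2.2, (hx' s).2.2]
        ring
    have hx2inv : ∀ s c, y s c < x s c → y s c < x2 s c := by
      intro s c hsc
      have h1 := hinv s c hsc
      simp only [hx2def]
      have e1 : (1 - θ) * (y s c) ≤ (1 - θ) * (x s c) :=
        mul_le_mul_of_nonneg_left hsc.le (by linarith)
      have e2 : θ * (y s c) ≤ θ * (x' s c) := mul_le_mul_of_nonneg_left h1.le hθ0
      rcases lt_or_ge θ 1 with hθ | hθ
      · have e1' : (1 - θ) * (y s c) < (1 - θ) * (x s c) :=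
          mul_lt_mul_of_pos_left hsc (by linarith)
        nlinarith
      · have hθ1' : θ = 1 := le_antisymm hθ1 hθ
        simp [hθ1']
        exact h1
    have hx2load : ∀ c, ∑ s, x2 s c
        = ∑ s, x s c + ε' * ((if c = a then (1:ℝ) else 0) - (if c = i then 1 else 0)) := by
      intro c
      simp only [hx2def]
      rw [Finset.sum_add_distrib, ← Finset.mul_sum, ← Finset.mul_sum, hload c]
      linear_combination ((if c = a then (1:ℝ) else 0) - (if c = i then 1 else 0)) * hθε
    have hx2a : μ ≤ x2 t a := by
      have h1 : μ ≤ x t a := min_le_left _ _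
      have h2 : μ ≤ x' t a := min_le_right _ _
      simp only [hx2def]
      have e1 : (1 - θ) * μ ≤ (1 - θ) * (x t a) := mul_le_mul_of_nonneg_left h1 (by linarith)
      have e2 : θ * μ ≤ θ * (x' t a) := mul_le_mul_of_nonneg_left h2 hθ0
      nlinarith
    have haN : a ∈ E.N t := by
      by_contra hc
      have := (hx t).2.1 a hc
      linarith
    set x3 : Fin m → Fin n → ℝ := fun s c =>
      if s = t then x2 s c + ε' * ((if c = b then (1:ℝ) else 0) - (if c = a then 1 else 0))
      else x2 s c with hx3def
    have hx3t : ∀ c, x3 t c = x2 t c + ε' * ((if c = b then (1:ℝ) else 0) - (if c = a then 1 else 0)) := by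
      intro c; simp [hx3def]
    have hx3o : ∀ s, s ≠ t → ∀ c, x3 s c = x2 s c := by
      intro s hs c; simp [hx3def, hs]
    have hx2ta : y t a < x2 t a := hx2inv t a hlt
    refine ⟨ε', hε'pos, x3, ?_, ?_, ?_⟩
    · intro s
      rcases eq_or_ne s t with rfl | hst
      · refine ⟨?_, ?_, ?_⟩
        · intro c
          rw [hx3t c]
          by_cases hca : c = a
          · by_cases hcb : c = b
            · rw [if_pos hca, if_pos hcb]
              have := (hx2f s).1 c
              linarith
            · rw [if_pos hca, if_neg hcb]
              subst hca
              linarith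
          · by_cases hcb : c = b
            · rw [if_neg hca, if_pos hcb]
              have := (hx2f s).1 c
              linarith
            · rw [if_neg hca, if_neg hcb]
              have := (hx2f s).1 c
              linarith
        · intro c hc
          rw [hx3t c]
          have hcb : c ≠ b := fun hcb => hc (hcb ▸ hbN)
          have hca : c ≠ a := fun hca => hc (hca ▸ haN)
          rw [(hx2f s).2.1 c hc, if_neg hcb, if_neg hca]; ring
        · rw [Finset.sum_congr rfl fun c _ => hx3t c]
          rw [Finset.sum_add_distrib, ← Finset.mul_sum, Finset.sum_sub_distrib]
          simp [Finset.sum_ite_eq', (hx2f s).2.2]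
      · refine ⟨?_, ?_, ?_⟩
        · intro c; rw [hx3o s hst c]; exact (hx2f s).1 c
        · intro c hc; rw [hx3o s hst c]; exact (hx2f s).2.1 c hc
        · rw [Finset.sum_congr rfl fun c _ => hx3o s hst c]; exact (hx2f s).2.2
    · intro s c hsc
      rcases eq_or_ne s t with rfl | hst
      · rw [hx3t c]
        by_cases hca : c = a
        · by_cases hcb : c = b
          · rw [if_pos hca, if_pos hcb]
            have := hx2inv s c hsc
            linarith
          · rw [if_pos hca, if_neg hcb]
            subst hca
            linarith
        · by_cases hcb : c = b
          · rw [if_neg hca, if_pos hcb]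
            have := hx2inv s c hsc
            linarith
          · rw [if_neg hca, if_neg hcb]
            have := hx2inv s c hsc
            linarith
      · rw [hx3o s hst c]; exact hx2inv s c hsc
    · intro c
      have hsplit : ∀ s, x3 s c = x2 s c +
          (if s = t then ε' * ((if c = b then (1:ℝ) else 0) - (if c = a then 1 else 0)) else 0) := by
        intro s
        rcases eq_or_ne s t with rfl | hst
        · rw [hx3t c]; simp
        · rw [hx3o s hst c]; simp [hst]
      rw [Finset.sum_congr rfl fun s _ => hsplit s, Finset.sum_add_distrib,
        Finset.sum_ite_eq' univ t, if_pos (mem_univ t), hx2load c]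
      ring
end Exchange

section MinNorm
variable {n m : ℕ}

lemma loads_exchange {E : ReqSeq n m} {ℓ ℓ' : Fin n → ℝ} (h : ℓ ∈ loads E) (h' : ℓ' ∈ loads E)
    {i : Fin n} (hi : ℓ' i < ℓ i) :
    ∃ j, ℓ j < ℓ' j ∧ ∃ ε, 0 < ε ∧
      (fun c => ℓ c + ε * ((if c = j then (1:ℝ) else 0) - (if c = i then 1 else 0))) ∈ loads E := by
  obtain ⟨x, hx, rfl⟩ := h
  obtain ⟨y, hy, rfl⟩ := h'
  simp only [Finset.sum_apply] at hi
  obtain ⟨j, hreach, hj⟩ := reach_exists_neg hx hy hi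
  obtain ⟨ε, hε, x', hx', -, hload⟩ := reach_move hx hy hreach
  refine ⟨j, by simpa [Finset.sum_apply] using hj, ε, hε, x', hx', ?_⟩
  funext c
  simp only [Finset.sum_apply]
  exact (hload c).symm

lemma loads_move_scale {E : ReqSeq n m} {ℓ : Fin n → ℝ} {i j : Fin n} {ε : ℝ} (hε : 0 < ε)
    (h : (fun c => ℓ c + ε * ((if c = j then (1:ℝ) else 0) - (if c = i then 1 else 0))) ∈ loads E)
    (hℓ : ℓ ∈ loads E) {δ : ℝ} (hδ0 : 0 ≤ δ) (hδ : δ ≤ ε) :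
    (fun c => ℓ c + δ * ((if c = j then (1:ℝ) else 0) - (if c = i then 1 else 0))) ∈ loads E := by
  have hcombo := loads_combo hℓ h (a := 1 - δ/ε) (b := δ/ε)
    (by rw [sub_nonneg]; exact (div_le_one hε).mpr hδ) (div_nonneg hδ0 hε.le) (by ring)
  convert hcombo using 1
  funext c
  have hde : δ/ε*ε = δ := div_mul_cancel₀ _ hε.ne'
  show _ = (1 - δ/ε) * (ℓ c) + (δ/ε) * (ℓ c + ε * ((if c = j then (1:ℝ) else 0) - (if c = i then 1 else 0)))
  linear_combination (-(if c = j then (1:ℝ) else 0) + (if c = i then 1 else 0)) * hde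

lemma sum_sq_move {n : ℕ} (L : Fin n → ℝ) {i j : Fin n} (hij : i ≠ j) (δ : ℝ) :
    ∑ c, (L c + δ * ((if c = j then (1:ℝ) else 0) - (if c = i then 1 else 0)))^2
      = (∑ c, (L c)^2) + (2*δ*(L j - L i) + 2*δ^2) := by
  have key : ∀ c ∈ (univ : Finset (Fin n)),
      (L c + δ * ((if c = j then (1:ℝ) else 0) - (if c = i then 1 else 0)))^2
        = (L c)^2 + ((if c = j then 2*δ*(L j) + δ^2 else 0) + (if c = i then -(2*δ*(L i)) + δ^2 else 0)) := by
    intro c _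
    by_cases hcj : c = j
    · have hci : c ≠ i := fun h => hij (h.symm.trans hcj)
      rw [if_pos hcj, if_neg hci, if_pos hcj, if_neg hci]
      subst hcj; ring
    · by_cases hci : c = i
      · rw [if_neg hcj, if_pos hci, if_neg hcj, if_pos hci]
        subst hci; ring
      · rw [if_neg hcj, if_neg hci, if_neg hcj, if_neg hci]
        ring
  rw [Finset.sum_congr rfl key, Finset.sum_add_distrib, Finset.sum_add_distrib,
    Finset.sum_ite_eq' univ j, Finset.sum_ite_eq' univ i,
    if_pos (mem_univ j), if_pos (mem_univ i)]
  ring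

lemma minnorm_mono {E : ReqSeq n m} {L : Fin n → ℝ} (hL : L ∈ loads E)
    (hmin : ∀ z ∈ loads E, ∑ c, (L c)^2 ≤ ∑ c, (z c)^2)
    {i j : Fin n} {ε : ℝ} (hε : 0 < ε)
    (h : (fun c => L c + ε * ((if c = j then (1:ℝ) else 0) - (if c = i then 1 else 0))) ∈ loads E) :
    L i ≤ L j := by
  rcases eq_or_ne i j with rfl | hij
  · exact le_refl _
  by_contra hlt
  push_neg at hlt
  set δ := min ε ((L i - L j)/2) with hδdef
  have hδ0 : 0 < δ := lt_min hε (by linarith)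
  have hδε : δ ≤ ε := min_le_left _ _
  have hδh : δ ≤ (L i - L j)/2 := min_le_right _ _
  have hz := loads_move_scale hε h hL hδ0.le hδε
  have hcmp := hmin _ hz
  rw [sum_sq_move L hij δ] at hcmp
  nlinarith

lemma exists_minnorm (E : ReqSeq n m) :
    ∃ L ∈ loads E, ∀ z ∈ loads E, ∑ c, (L c)^2 ≤ ∑ c, (z c)^2 := by
  have hcont : Continuous (fun z : Fin n → ℝ => ∑ c, (z c)^2) :=
    continuous_finset_sum _ fun c _ => (continuous_apply c).pow 2
  obtain ⟨L, hL, hmin⟩ := (loads_isCompact E).exists_isMinOn (loads_nonempty E)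
    hcont.continuousOn
  exact ⟨L, hL, fun z hz => hmin hz⟩

end MinNorm

section Main
variable {n m : ℕ}

lemma sum_move_subset {n : ℕ} (w : Fin n → ℝ) (i j : Fin n) (ε : ℝ) (S : Finset (Fin n)) :
    ∑ c ∈ S, (w c + ε * ((if c = j then (1:ℝ) else 0) - (if c = i then 1 else 0)))
      = ∑ c ∈ S, w c + ε * ((if j ∈ S then (1:ℝ) else 0) - (if i ∈ S then 1 else 0)) := by
  rw [Finset.sum_add_distrib, ← Finset.mul_sum, Finset.sum_sub_distrib]
  simp [Finset.sum_ite_eq']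

lemma minnorm_topSum_le {E : ReqSeq n m} {L : Fin n → ℝ} (hL : L ∈ loads E)
    (hmin : ∀ z ∈ loads E, ∑ c, (L c)^2 ≤ ∑ c, (z c)^2) :
    ∀ ℓ ∈ loads E, ∀ k ≤ n, topSum L k ≤ topSum ℓ k := by
  intro ℓ hℓ k hk
  classical
  set Cs : Set (Fin n → ℝ) :=
    ⋂ (S : Finset (Fin n)) (_ : S.card = k), {z | ∑ c ∈ S, z c ≤ topSum ℓ k} with hCsdef
  have hCscl : IsClosed Cs :=
    isClosed_iInter fun S => isClosed_iInter fun _ =>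
      isClosed_le (continuous_finset_sum _ fun c _ => continuous_apply c) continuous_const
  have hCcomp : IsCompact (loads E ∩ Cs) := (loads_isCompact E).inter_right hCscl
  have hmemCs : ∀ z : Fin n → ℝ,
      z ∈ Cs ↔ ∀ S : Finset (Fin n), S.card = k → ∑ c ∈ S, z c ≤ topSum ℓ k := by
    intro z; simp [hCsdef]
  have hℓC : ℓ ∈ loads E ∩ Cs :=
    ⟨hℓ, (hmemCs ℓ).mpr fun S hS => sum_le_topSum ℓ hS⟩
  have hcont : Continuous (fun z : Fin n → ℝ => ∑ c, (z c - L c)^2) :=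
    continuous_finset_sum _ fun c _ => (((continuous_apply c).sub continuous_const).pow 2)
  obtain ⟨w, hwC, hwmin⟩ := hCcomp.exists_isMinOn ⟨ℓ, hℓC⟩ hcont.continuousOn
  have hwK : w ∈ loads E := hwC.1
  have hwHalf : ∀ S : Finset (Fin n), S.card = k → ∑ c ∈ S, w c ≤ topSum ℓ k :=
    (hmemCs w).mp hwC.2
  have hwL : w = L := by
    by_contra hne
    have hsum : ∑ c, w c = ∑ c, L c := by rw [loads_sum hwK, loads_sum hL]
    have hA : ∃ i, L i < w i := by
      by_contra hcon
      push_neg at hcon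
      apply hne
      funext c
      exact le_antisymm (hcon c)
        (by
          by_contra hlt
          push_neg at hlt
          have h1 : ∑ c, w c < ∑ c, L c := by
            apply Finset.sum_lt_sum (fun c _ => hcon c) ⟨c, mem_univ c, hlt⟩
          linarith)
    set A := univ.filter (fun c => L c < w c) with hAdef
    have hAne : A.Nonempty := ⟨hA.choose, by simp [hAdef]; exact hA.choose_spec⟩
    obtain ⟨i, hiA, himax⟩ := A.exists_max_image w hAne
    simp only [hAdef, mem_filter, mem_univ, true_and] at hiA
    obtain ⟨j, hj, ε₀, hε₀, hz₀⟩ := loads_exchange hwK hL hiA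
    have hij : i ≠ j := fun h => by rw [h] at hiA; linarith
    rcases le_or_gt (w i) (w j) with hcase | hcase
    · -- case 1 : contradiction with maximality via min-norm monotonicity
      obtain ⟨j', hj', ε₁, hε₁, hz₁⟩ := loads_exchange hL hwK hj
      have hLle : L j ≤ L j' := minnorm_mono hL hmin hε₁ hz₁
      have hwj' : w i < w j' := by linarith
      have hj'A : j' ∈ A := by simp [hAdef]; exact hj'
      exact absurd (himax j' hj'A) (not_le.mpr hwj')
    · -- case 2 : strict distance decrease
      set ε := min ε₀ (min ((w i - w j)/2) ((L j - w j)/2)) with hεdef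
      have hε : 0 < ε := lt_min hε₀ (lt_min (by linarith) (by linarith))
      have hε1 : ε ≤ ε₀ := min_le_left _ _
      have hε2 : ε ≤ (w i - w j)/2 := le_trans (min_le_right _ _) (min_le_left _ _)
      have hε3 : ε ≤ (L j - w j)/2 := le_trans (min_le_right _ _) (min_le_right _ _)
      have hwz : (fun c => w c + ε * ((if c = j then (1:ℝ) else 0) - (if c = i then 1 else 0)))
          ∈ loads E := loads_move_scale hε₀ hz₀ hwK hε.le hε1
      have hzC : (fun c => w c + ε * ((if c = j then (1:ℝ) else 0) - (if c = i then 1 else 0)))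
          ∈ loads E ∩ Cs := by
        refine ⟨hwz, (hmemCs _).mpr ?_⟩
        intro S hS
        rw [sum_move_subset]
        by_cases hjS : j ∈ S
        · by_cases hiS : i ∈ S
          · simp only [if_pos hjS, if_pos hiS]
            have := hwHalf S hS
            linarith
          · -- swap argument
            set S' := insert i (S.erase j) with hS'def
            have hiS' : i ∉ S.erase j := fun h => hiS (Finset.mem_of_mem_erase h)
            have hS'card : S'.card = k := by
              rw [hS'def, Finset.card_insert_of_notMem hiS',
                Finset.card_erase_of_mem hjS, hS]
              have hk1 : 1 ≤ k := by
                rw [← hS]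
                exact Finset.card_pos.mpr ⟨j, hjS⟩
              omega
            have hsum' : ∑ c ∈ S', w c = ∑ c ∈ S, w c + w i - w j := by
              rw [hS'def, Finset.sum_insert hiS']
              have := Finset.sum_erase_add S w hjS
              linarith
            have := hwHalf S' hS'card
            rw [hsum'] at this
            simp only [if_pos hjS, if_neg hiS]
            linarith
        · simp only [if_neg hjS]
          have := hwHalf S hS
          by_cases hiS : i ∈ S <;> simp only [if_pos, if_neg, hiS, if_true, if_false] <;> linarith
      -- distance strictly decreases : contradiction
      have hψ : ∑ c, ((w c + ε * ((if c = j then (1:ℝ) else 0) - (if c = i then 1 else 0))) - L c)^2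
          = (∑ c, (w c - L c)^2) + (2*ε*((w j - L j) - (w i - L i)) + 2*ε^2) := by
        have h0 := sum_sq_move (fun c => w c - L c) hij ε
        calc ∑ c, ((w c + ε * ((if c = j then (1:ℝ) else 0) - (if c = i then 1 else 0))) - L c)^2
            = ∑ c, ((fun c => w c - L c) c + ε * ((if c = j then (1:ℝ) else 0) - (if c = i then 1 else 0)))^2 := by
              apply Finset.sum_congr rfl
              intro c _
              ring
          _ = (∑ c, (w c - L c)^2) + (2*ε*((w j - L j) - (w i - L i)) + 2*ε^2) := h0
      have hlt2 : ∑ c, ((w c + ε * ((if c = j then (1:ℝ) else 0) - (if c = i then 1 else 0))) - L c)^2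
          < ∑ c, (w c - L c)^2 := by
        rw [hψ]
        nlinarith
      exact absurd (hwmin hzC) (not_le.mpr hlt2)
  subst hwL
  exact topSum_le hk hwHalf

end Main

section Sorted
variable {n : ℕ}

lemma exists_antitone_perm (u : Fin n → ℝ) : ∃ σ : Equiv.Perm (Fin n), Antitone (u ∘ σ) := by
  refine ⟨Fin.revPerm.trans (Tuple.sort u), fun a b hab => ?_⟩
  exact Tuple.monotone_sort u (by simpa [Fin.rev_le_rev] using hab)

lemma filter_lt_eq_map {k : ℕ} (hk : k ≤ n) :
    (univ.filter (fun r : Fin n => (r : ℕ) < k)) = Finset.map (Fin.castLEEmb hk) univ := by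
  ext r
  simp only [mem_filter, mem_univ, true_and, Finset.mem_map]
  constructor
  · intro hr
    exact ⟨⟨(r : ℕ), hr⟩, rfl⟩
  · rintro ⟨s, rfl⟩
    exact s.isLt

lemma topSum_eq_sorted (u : Fin n → ℝ) :
    ∃ σ : Equiv.Perm (Fin n), ∀ k, k ≤ n →
      topSum u k = ∑ r ∈ univ.filter (fun r : Fin n => (r : ℕ) < k), u (σ r) := by
  classical
  obtain ⟨σ, hσ⟩ := exists_antitone_perm u
  refine ⟨σ, fun k hk => ?_⟩
  apply IsGreatest.csSup_eq
  constructor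
  · -- membership : the top-k set achieves this value
    refine ⟨(univ.filter (fun r : Fin n => (r : ℕ) < k)).image σ, ?_, ?_⟩
    · show ((univ.filter (fun r : Fin n => (r : ℕ) < k)).image σ).card = k
      rw [Finset.card_image_of_injective _ σ.injective, filter_lt_eq_map hk,
        Finset.card_map, card_univ, Fintype.card_fin]
    · exact Finset.sum_image (fun a _ b _ h => σ.injective h)
  · rintro r ⟨S, hS, rfl⟩
    show ∑ i ∈ S, u i ≤ _
    have hsum : ∑ i ∈ S, u i = ∑ r ∈ S.image σ.symm, u (σ r) := by
      rw [Finset.sum_image (fun a _ b _ h => σ.symm.injective h)]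
      simp
    rw [hsum]
    set T := S.image σ.symm with hTdef
    have hTcard : T.card = k := by
      rw [hTdef, Finset.card_image_of_injective _ σ.symm.injective]
      exact hS
    set e := T.orderIsoOfFin hTcard with hedef
    have he : ∀ s : Fin k, (s : ℕ) ≤ ((e s : Fin n) : ℕ) := by
      intro s
      obtain ⟨v, hv⟩ := s
      induction v with
      | zero => exact Nat.zero_le _
      | succ p ih =>
        have hp : p < k := Nat.lt_of_succ_lt hv
        have h1 := ih hp
        have h2 : (e ⟨p, hp⟩ : Fin n) < (e ⟨p + 1, hv⟩ : Fin n) := by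
          have : (⟨p, hp⟩ : Fin k) < ⟨p + 1, hv⟩ := by
            rw [Fin.mk_lt_mk]; exact Nat.lt_succ_self p
          exact e.strictMono this
        have h2' : ((e ⟨p, hp⟩ : Fin n) : ℕ) < ((e ⟨p + 1, hv⟩ : Fin n) : ℕ) := h2
        have h1' : p ≤ ((e ⟨p, hp⟩ : Fin n) : ℕ) := h1
        show p + 1 ≤ ((e ⟨p + 1, hv⟩ : Fin n) : ℕ)
        omega
    -- sum over T equals sum over Fin k via e
    have hTsum : ∑ r ∈ T, u (σ r) = ∑ s : Fin k, u (σ (e s)) := by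
      rw [← Finset.sum_coe_sort T (fun r => u (σ r))]
      exact (Equiv.sum_comp e.toEquiv (fun r : T => u (σ r))).symm
    have htarget : ∑ r ∈ univ.filter (fun r : Fin n => (r : ℕ) < k), u (σ r)
        = ∑ s : Fin k, u (σ (Fin.castLE hk s)) := by
      rw [filter_lt_eq_map hk, Finset.sum_map]
      rfl
    rw [hTsum, htarget]
    apply Finset.sum_le_sum
    intro s _
    apply hσ
    show Fin.castLE hk s ≤ (e s : Fin n)
    rw [Fin.le_def]
    simpa using he s

lemma sum_sq_eq_of_topSum_eq {u v : Fin n → ℝ}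
    (h : ∀ k, k ≤ n → topSum u k = topSum v k) :
    ∑ c, (u c)^2 = ∑ c, (v c)^2 := by
  classical
  obtain ⟨σ, hσ⟩ := topSum_eq_sorted u
  obtain ⟨τ, hτ⟩ := topSum_eq_sorted v
  have hstep : ∀ (w : Fin n → ℝ) (π : Equiv.Perm (Fin n)),
      (∀ k, k ≤ n → topSum w k = ∑ r ∈ univ.filter (fun r : Fin n => (r : ℕ) < k), w (π r)) →
      ∀ r : Fin n, w (π r) = topSum w ((r : ℕ) + 1) - topSum w (r : ℕ) := by
    intro w π hw r
    have h1 : (r : ℕ) + 1 ≤ n := r.isLt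
    have h2 : (r : ℕ) ≤ n := le_of_lt r.isLt
    rw [hw _ h1, hw _ h2]
    have hins : univ.filter (fun s : Fin n => (s : ℕ) < (r : ℕ) + 1)
        = insert r (univ.filter (fun s : Fin n => (s : ℕ) < (r : ℕ))) := by
      ext s
      simp only [mem_filter, mem_univ, true_and, Finset.mem_insert]
      constructor
      · intro hs
        rcases Nat.lt_succ_iff_lt_or_eq.mp hs with hlt | heq
        · exact Or.inr hlt
        · exact Or.inl (Fin.ext heq)
      · rintro (rfl | hs)
        · exact Nat.lt_succ_self _
        · exact Nat.lt_succ_of_lt hs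
    have hnotmem : r ∉ univ.filter (fun s : Fin n => (s : ℕ) < (r : ℕ)) := by simp
    rw [hins, Finset.sum_insert hnotmem]
    ring
  have hkey : ∀ r : Fin n, u (σ r) = v (τ r) := by
    intro r
    rw [hstep u σ hσ r, hstep v τ hτ r, h _ r.isLt, h _ (le_of_lt r.isLt)]
  calc ∑ c, (u c)^2 = ∑ r, (u (σ r))^2 := (Equiv.sum_comp σ (fun c => (u c)^2)).symm
    _ = ∑ r, (v (τ r))^2 := by
        apply Finset.sum_congr rfl
        intro r _
        rw [hkey r]
    _ = ∑ c, (v c)^2 := Equiv.sum_comp τ (fun c => (v c)^2)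

end Sorted


/-- **Fact (Existence of a Majorization Minimal Hindsight Solution).** Every request
sequence `E` admits a unique majorization-minimal feasible load vector `ℓ*`; consequently
`ℓ*` maximizes every Schur-concave `f` and minimizes every Schur-convex `g` over `Δ(E)`. -/
theorem opt_exists_unique (n m : ℕ) (E : ReqSeq n m) :
    ∃ ℓstar : Fin n → ℝ, IsOpt E ℓstar ∧
      (∀ ℓ' : Fin n → ℝ, IsOpt E ℓ' → ℓ' = ℓstar) ∧
      (∀ f : (Fin n → ℝ) → ℝ, SchurConcave f → ∀ ℓ ∈ loads E, f ℓ ≤ f ℓstar) ∧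
      (∀ g : (Fin n → ℝ) → ℝ, SchurConvex g → ∀ ℓ ∈ loads E, g ℓstar ≤ g ℓ) := by
  obtain ⟨L, hL, hmin⟩ := exists_minnorm E
  have htop := minnorm_topSum_le hL hmin
  have hopt : IsOpt E L := by
    refine ⟨hL, fun ℓ' hℓ' => ⟨?_, fun k hk => htop ℓ' hℓ' k hk⟩⟩
    rw [loads_sum hℓ', loads_sum hL]
  refine ⟨L, hopt, ?_, ?_, ?_⟩
  · -- uniqueness
    intro ℓ' hℓ'
    have h1 : ∀ k, k ≤ n → topSum ℓ' k = topSum L k := fun k hk =>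
      le_antisymm ((hℓ'.2 L hL).2 k hk) ((hopt.2 ℓ' hℓ'.1).2 k hk)
    set mid := fun c => (1/2 : ℝ) * L c + (1/2) * ℓ' c with hmiddef
    have hmid : mid ∈ loads E := loads_combo hL hℓ'.1 (by norm_num) (by norm_num) (by norm_num)
    have hmtop : ∀ k, k ≤ n → topSum mid k = topSum L k := by
      intro k hk
      apply le_antisymm
      · apply topSum_le hk
        intro S hS
        have ha := sum_le_topSum L hS
        have hb := sum_le_topSum ℓ' hS
        have hsum : ∑ c ∈ S, mid c
            = (1/2) * (∑ c ∈ S, L c) + (1/2) * (∑ c ∈ S, ℓ' c) := by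
          simp [hmiddef, Finset.sum_add_distrib, Finset.mul_sum]
        rw [hsum]
        have := h1 k hk
        linarith
      · exact (hopt.2 mid hmid).2 k hk
    have hsq1 : ∑ c, (mid c)^2 = ∑ c, (L c)^2 := sum_sq_eq_of_topSum_eq hmtop
    have hsq2 : ∑ c, (ℓ' c)^2 = ∑ c, (L c)^2 := sum_sq_eq_of_topSum_eq h1
    have hzero : ∑ c, ((L c - ℓ' c)/2)^2 = 0 := by
      have expand : ∀ c ∈ (Finset.univ : Finset (Fin n)), ((L c - ℓ' c)/2)^2
          = (((L c)^2 + (ℓ' c)^2)/2 - (mid c)^2) := by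
        intro c _
        simp only [hmiddef]
        ring
      rw [Finset.sum_congr rfl expand, Finset.sum_sub_distrib]
      have hhalf : ∑ c, (((L c)^2 + (ℓ' c)^2)/2)
          = ((∑ c, (L c)^2) + ∑ c, (ℓ' c)^2)/2 := by
        rw [← Finset.sum_div, Finset.sum_add_distrib]
      rw [hhalf, hsq1, hsq2]
      ring
    have hall := (Finset.sum_eq_zero_iff_of_nonneg (fun c _ => sq_nonneg _)).mp hzero
    funext c
    have hc := sq_eq_zero_iff.mp (hall c (Finset.mem_univ c))
    linarith
  · intro f hf ℓ hℓ
    exact hf L ℓ (loads_nonneg hL) (loads_nonneg hℓ) (hopt.2 ℓ hℓ)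
  · intro g hg ℓ hℓ
    exact hg L ℓ (loads_nonneg hL) (loads_nonneg hℓ) (hopt.2 ℓ hℓ)
end

section
/- For any nonempty N ⊆ [n], quantity q > 0, and load vector ℓ ∈ ℝ^n_{≥0}, the allocation x* ∈ Δ(N,q) selected by water-filling (maximizing min_{i∈N}(x(i) + ℓ(i)) over x ∈ Δ(N,q)) satisfies: (Uniqueness) x* + ℓ is the unique majorization-minimal vector in the set {x + ℓ : x ∈ Δ(N,q)}; and (Equalized loads) for all i, j in the support N̂ = {i ∈ N : x*(i) > 0}, x*(i) + ℓ(i) = x*(j) + ℓ(j). -/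
open Finset MeasureTheory

private lemma exists_max {n : ℕ} (x : Fin n → ℝ) (k : ℕ) (hk : k ≤ n) :
    ∃ S : Finset (Fin n), S.card = k ∧
      (∀ T : Finset (Fin n), T.card = k → ∑ i ∈ T, x i ≤ ∑ i ∈ S, x i) ∧
      topSum x k = ∑ i ∈ S, x i := by
  have hne : ((Finset.univ : Finset (Fin n)).powersetCard k).Nonempty := by
    rw [Finset.powersetCard_nonempty]
    simpa using hk
  obtain ⟨S, hSmem, hSmax⟩ :=
    Finset.exists_max_image (Finset.univ.powersetCard k) (fun s => ∑ i ∈ s, x i) hne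
  have hScard : S.card = k := (Finset.mem_powersetCard.mp hSmem).2
  have hb : ∀ T : Finset (Fin n), T.card = k → ∑ i ∈ T, x i ≤ ∑ i ∈ S, x i := fun T hT =>
    hSmax T (Finset.mem_powersetCard.mpr ⟨Finset.subset_univ T, hT⟩)
  refine ⟨S, hScard, hb, ?_⟩
  apply IsGreatest.csSup_eq
  constructor
  · exact ⟨S, hScard, rfl⟩
  · rintro r ⟨T, hT, rfl⟩
    exact hb T hT

private lemma topSum_zero {n : ℕ} (x : Fin n → ℝ) : topSum x 0 = 0 := by
  obtain ⟨S, hS, -, heq⟩ := exists_max x 0 (Nat.zero_le n)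
  rw [heq, Finset.card_eq_zero.mp hS, Finset.sum_empty]

private lemma le_topSum {n : ℕ} (x : Fin n → ℝ) {k : ℕ} (hk : k ≤ n)
    (T : Finset (Fin n)) (hT : T.card = k) : ∑ i ∈ T, x i ≤ topSum x k := by
  obtain ⟨S, hS, hmax, heq⟩ := exists_max x k hk
  rw [heq]; exact hmax T hT

private lemma topSum_le_of {n : ℕ} (x : Fin n → ℝ) {k : ℕ} (hk : k ≤ n) {c : ℝ}
    (h : ∀ T : Finset (Fin n), T.card = k → ∑ i ∈ T, x i ≤ c) : topSum x k ≤ c := by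
  obtain ⟨S, hS, -, heq⟩ := exists_max x k hk
  rw [heq]; exact h S hS

private lemma topSum_le_dual {n : ℕ} (x : Fin n → ℝ) {k : ℕ} (hk : k ≤ n) (θ : ℝ) :
    topSum x k ≤ k * θ + ∑ i, max (x i - θ) 0 := by
  apply topSum_le_of x hk
  intro T hT
  have h1 : ∑ i ∈ T, x i ≤ ∑ i ∈ T, (θ + max (x i - θ) 0) := by
    apply Finset.sum_le_sum
    intro i _
    have := le_max_left (x i - θ) 0
    linarith
  have h2 : ∑ i ∈ T, (θ + max (x i - θ) 0) = k * θ + ∑ i ∈ T, max (x i - θ) 0 := by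
    rw [Finset.sum_add_distrib, Finset.sum_const, hT, nsmul_eq_mul]
  have h3 : ∑ i ∈ T, max (x i - θ) 0 ≤ ∑ i, max (x i - θ) 0 := by
    apply Finset.sum_le_sum_of_subset_of_nonneg (Finset.subset_univ T)
    intro i _ _
    exact le_max_right _ _
  linarith

private lemma exists_theta {n : ℕ} (x : Fin n → ℝ) {k : ℕ} (hk1 : 1 ≤ k) (hk : k ≤ n) :
    ∃ θ : ℝ, k * θ + ∑ i, max (x i - θ) 0 ≤ topSum x k := by
  obtain ⟨S, hcard, hmax, heq⟩ := exists_max x k hk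
  have hSne : S.Nonempty := Finset.card_pos.mp (by omega)
  refine ⟨S.inf' hSne x, ?_⟩
  set θ := S.inf' hSne x with hθdef
  have hout : ∀ i, i ∉ S → x i ≤ θ := by
    intro i hi
    by_contra hlt
    push_neg at hlt
    obtain ⟨j, hj, hjeq⟩ := S.exists_mem_eq_inf' hSne x
    have hij : i ≠ j := fun h => hi (h ▸ hj)
    have hins : i ∉ S.erase j := fun h => hi (Finset.mem_of_mem_erase h)
    have hcard' : (insert i (S.erase j)).card = k := by
      rw [Finset.card_insert_of_notMem hins, Finset.card_erase_of_mem hj, hcard]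
      omega
    have hle := hmax _ hcard'
    rw [Finset.sum_insert hins, Finset.sum_erase_eq_sub hj] at hle
    rw [← hjeq] at hle
    linarith
  have hin : ∀ i ∈ S, θ ≤ x i := fun i hi => Finset.inf'_le x hi
  have hsplit : ∑ i, max (x i - θ) 0
      = ∑ i ∈ S, max (x i - θ) 0 + ∑ i ∈ Sᶜ, max (x i - θ) 0 :=
    (Finset.sum_add_sum_compl S _).symm
  have hS1 : ∑ i ∈ S, max (x i - θ) 0 = ∑ i ∈ S, x i - k * θ := by
    have : ∑ i ∈ S, max (x i - θ) 0 = ∑ i ∈ S, (x i - θ) :=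
      Finset.sum_congr rfl fun i hi => max_eq_left (by linarith [hin i hi])
    rw [this, Finset.sum_sub_distrib, Finset.sum_const, hcard, nsmul_eq_mul]
  have hS2 : ∑ i ∈ Sᶜ, max (x i - θ) 0 = 0 := by
    apply Finset.sum_eq_zero
    intro i hi
    have := hout i (Finset.mem_compl.mp hi)
    exact max_eq_right (by linarith)
  rw [heq, hsplit, hS1, hS2]
  linarith

private lemma topSum_le_topSum {n : ℕ} (u v : Fin n → ℝ)
    (h : ∀ θ : ℝ, ∑ i, max (u i - θ) 0 ≤ ∑ i, max (v i - θ) 0) :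
    ∀ k ≤ n, topSum u k ≤ topSum v k := by
  intro k hk
  rcases Nat.eq_zero_or_pos k with h0 | h1
  · subst h0
    simp [topSum_zero]
  · obtain ⟨θ, hθ⟩ := exists_theta v h1 hk
    have := topSum_le_dual u hk θ
    have := h θ
    linarith

/-- **Observation (Properties of water-filling).** For any nonempty `N ⊆ [n]`, `q > 0`,
and load vector `ℓ ≥ 0`, the water-filling allocation `x*` (the maximizer of
`min_{i∈N}(x(i) + ℓ(i))` over `Δ(N,q)`) satisfies: `x* + ℓ` is the unique
majorization-minimal vector in `{x + ℓ : x ∈ Δ(N,q)}`, and the post-allocation loads of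
all nodes in the support of `x*` are equal. -/
theorem wf_step_properties (n : ℕ) (N : Finset (Fin n)) (hN : N.Nonempty)
    (q : ℝ) (hq : 0 < q) (ℓ : Fin n → ℝ) (hℓ : ∀ i, 0 ≤ ℓ i)
    (xstar : Fin n → ℝ) (hx : xstar ∈ allocSet n N q)
    (hmax : ∀ y ∈ allocSet n N q,
      N.inf' hN (fun i => y i + ℓ i) ≤ N.inf' hN (fun i => xstar i + ℓ i)) :
    (∀ z ∈ allocSet n N q,
      Majorizes (fun i => z i + ℓ i) (fun i => xstar i + ℓ i)) ∧
    (∀ z ∈ allocSet n N q,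
      (∀ w ∈ allocSet n N q, Majorizes (fun i => w i + ℓ i) (fun i => z i + ℓ i)) →
      z = xstar) ∧
    (∀ i ∈ N, ∀ j ∈ N, 0 < xstar i → 0 < xstar j → xstar i + ℓ i = xstar j + ℓ j) := by
  obtain ⟨hx0, hxN, hxsum⟩ := hx
  set h := N.inf' hN (fun i => xstar i + ℓ i) with hdef
  have fact3 : ∀ i ∈ N, h ≤ xstar i + ℓ i := fun i hi => Finset.inf'_le _ hi
  have fact1 : ∀ i, 0 < xstar i → xstar i + ℓ i = h := by
    intro i hipos
    have hiN : i ∈ N := by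
      by_contra hiN
      exact absurd (hxN i hiN) (ne_of_gt hipos)
    refine le_antisymm ?_ (fact3 i hiN)
    by_contra hgt
    push_neg at hgt
    have hgap : 0 < xstar i + ℓ i - h := by linarith
    have hc1 : 1 ≤ N.card := Finset.card_pos.mpr hN
    have hcR : (1:ℝ) ≤ (N.card : ℝ) := by exact_mod_cast hc1
    set ε := min (xstar i) ((xstar i + ℓ i - h) / 2) with hεdef
    have hε : 0 < ε := lt_min hipos (by linarith)
    have hε1 : ε ≤ xstar i := min_le_left _ _
    have hε2 : ε ≤ (xstar i + ℓ i - h) / 2 := min_le_right _ _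
    set δ := ε / N.card with hδdef
    have hδ : 0 < δ := div_pos hε (by linarith)
    have hcδ : (N.card : ℝ) * δ = ε := by
      rw [hδdef]
      field_simp
    set y : Fin n → ℝ := fun j =>
      xstar j + (if j ∈ N then δ else 0) - (if j = i then (N.card : ℝ) * δ else 0) with hydef
    have hyfeas : y ∈ allocSet n N q := by
      refine ⟨?_, ?_, ?_⟩
      · intro j
        by_cases hji : j = i
        · subst hji
          simp only [hydef, if_pos hiN, if_pos rfl, if_true, hcδ]
          linarith
        · by_cases hjN : j ∈ N
          · simp only [hydef, if_pos hjN, if_neg hji]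
            linarith [hx0 j]
          · simp only [hydef, if_neg hjN, if_neg hji]
            linarith [hx0 j]
      · intro j hjN
        have hji : j ≠ i := fun hh => hjN (hh ▸ hiN)
        simp only [hydef, if_neg hjN, if_neg hji, hxN j hjN]
        ring
      · simp only [hydef]
        rw [Finset.sum_sub_distrib, Finset.sum_add_distrib,
          Finset.sum_ite_eq' Finset.univ i (fun _ => (N.card:ℝ)*δ)]
        rw [Finset.sum_ite_mem Finset.univ N (fun _ => δ), Finset.univ_inter,
          Finset.sum_const, nsmul_eq_mul]
        simp [hxsum]
    have hlow : h < N.inf' hN (fun j => y j + ℓ j) := by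
      rw [Finset.lt_inf'_iff]
      intro j hj
      by_cases hji : j = i
      · subst hji
        simp only [hydef, if_pos hj, if_pos rfl, if_true, hcδ]
        linarith
      · simp only [hydef, if_pos hj, if_neg hji]
        have := fact3 j hj
        linarith
    have := hmax y hyfeas
    linarith
  have part1 : ∀ z ∈ allocSet n N q,
      Majorizes (fun i => z i + ℓ i) (fun i => xstar i + ℓ i) := by
    rintro z ⟨hz0, hzN, hzsum⟩
    have hsum : ∑ i, (z i + ℓ i) = ∑ i, (xstar i + ℓ i) := by
      rw [Finset.sum_add_distrib, Finset.sum_add_distrib, hzsum, hxsum]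
    refine ⟨hsum, ?_⟩
    apply topSum_le_topSum
    intro θ
    show ∑ i, max ((xstar i + ℓ i) - θ) 0 ≤ ∑ i, max ((z i + ℓ i) - θ) 0
    rcases le_total h θ with hθ | hθ
    · apply Finset.sum_le_sum
      intro i _
      rcases (hx0 i).lt_or_eq with hpos | heq0
      · have := fact1 i hpos
        rw [max_eq_right (by linarith)]
        exact le_max_right _ _
      · exact max_le_max (by linarith [hz0 i]) le_rfl
    · have ident : ∀ a : ℝ, max (a - θ) 0 = (a - θ) + max (θ - a) 0 := by
        intro a
        rcases le_total a θ with hh | hh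
        · rw [max_eq_right (by linarith), max_eq_left (by linarith)]
          ring
        · rw [max_eq_left (by linarith), max_eq_right (by linarith)]
          ring
      have key : ∀ i, max (θ - (xstar i + ℓ i)) 0 ≤ max (θ - (z i + ℓ i)) 0 := by
        intro i
        by_cases hiN : i ∈ N
        · rw [max_eq_right (by linarith [fact3 i hiN])]
          exact le_max_right _ _
        · rw [hxN i hiN, hzN i hiN]
      calc ∑ i, max ((xstar i + ℓ i) - θ) 0
          = ∑ i, ((xstar i + ℓ i) - θ) + ∑ i, max (θ - (xstar i + ℓ i)) 0 := by
            rw [← Finset.sum_add_distrib]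
            exact Finset.sum_congr rfl fun i _ => ident _
        _ ≤ ∑ i, ((z i + ℓ i) - θ) + ∑ i, max (θ - (z i + ℓ i)) 0 := by
            have e : ∑ i, ((xstar i + ℓ i) - θ) = ∑ i, ((z i + ℓ i) - θ) := by
              rw [Finset.sum_sub_distrib, Finset.sum_sub_distrib, hsum]
            have e2 := Finset.sum_le_sum (fun i (_ : i ∈ Finset.univ) => key i)
            linarith
        _ = ∑ i, max ((z i + ℓ i) - θ) 0 := by
            rw [← Finset.sum_add_distrib]
            exact (Finset.sum_congr rfl fun i _ => ident _).symm
  refine ⟨part1, ?_, ?_⟩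
  · -- uniqueness
    rintro z hz hzmin
    obtain ⟨hz0, hzN, hzsum⟩ := hz
    by_contra hne
    have hex : ∃ j, xstar j < z j := by
      by_contra hall
      push_neg at hall
      apply hne
      funext j
      have hsums : ∑ j, z j = ∑ j, xstar j := by rw [hzsum, hxsum]
      exact (Finset.sum_eq_sum_iff_of_le (fun i _ => hall i)).mp hsums j (Finset.mem_univ j)
    obtain ⟨j₀, hj₀⟩ := hex
    have hj₀N : j₀ ∈ N := by
      by_contra hcon
      rw [hzN j₀ hcon, hxN j₀ hcon] at hj₀
      exact lt_irrefl _ hj₀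
    set u : Fin n → ℝ := fun i => xstar i + ℓ i with hudef
    set v : Fin n → ℝ := fun i => z i + ℓ i with hvdef
    have huv : u j₀ < v j₀ := by simp only [hudef, hvdef]; linarith
    set K := insert j₀ (Finset.univ.filter fun i => u j₀ < u i) with hKdef
    have hj₀K : j₀ ∈ K := Finset.mem_insert_self _ _
    have hkn : K.card ≤ n := by simpa using Finset.card_le_univ K
    have claim1 : topSum u K.card ≤ ∑ i ∈ K, u i := by
      apply topSum_le_of u hkn
      intro T hT
      have h1 : ∀ i ∈ T \ K, u i ≤ u j₀ := by
        intro i hi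
        have := (Finset.mem_sdiff.mp hi).2
        simp only [hKdef, Finset.mem_insert, Finset.mem_filter, Finset.mem_univ,
          true_and, not_or, not_lt] at this
        exact this.2
      have h2 : ∀ i ∈ K \ T, u j₀ ≤ u i := by
        intro i hi
        have := (Finset.mem_sdiff.mp hi).1
        simp only [hKdef, Finset.mem_insert, Finset.mem_filter, Finset.mem_univ,
          true_and] at this
        rcases this with hh | hh
        · rw [hh]
        · exact hh.le
      have hcards : (T \ K).card = (K \ T).card := by
        have c1 := Finset.card_sdiff_add_card_inter T K
        have c2 := Finset.card_sdiff_add_card_inter K T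
        rw [Finset.inter_comm] at c2
        omega
      have a1 : ∑ i ∈ T \ K, u i ≤ (T \ K).card • u j₀ :=
        Finset.sum_le_card_nsmul _ _ _ h1
      have a2 : (K \ T).card • u j₀ ≤ ∑ i ∈ K \ T, u i :=
        Finset.card_nsmul_le_sum _ _ _ h2
      rw [hcards] at a1
      have a3 : ∑ i ∈ T \ K, u i ≤ ∑ i ∈ K \ T, u i := le_trans a1 a2
      have d1 : ∑ i ∈ T ∩ K, u i + ∑ i ∈ T \ K, u i = ∑ i ∈ T, u i :=
        Finset.sum_inter_add_sum_sdiff T K u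
      have d2 : ∑ i ∈ K ∩ T, u i + ∑ i ∈ K \ T, u i = ∑ i ∈ K, u i :=
        Finset.sum_inter_add_sum_sdiff K T u
      rw [Finset.inter_comm] at d2
      linarith
    have claim2 : ∑ i ∈ K, u i < ∑ i ∈ K, v i := by
      apply Finset.sum_lt_sum
      · intro i hiK
        rcases Finset.mem_insert.mp hiK with hh | hh
        · rw [hh]; exact huv.le
        · have hgt : u j₀ < u i := (Finset.mem_filter.mp hh).2
          have hge : h ≤ u j₀ := fact3 j₀ hj₀N
          have hxi0 : xstar i = 0 := by
            by_contra hpos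
            have := fact1 i (lt_of_le_of_ne (hx0 i) (Ne.symm hpos))
            have : u i = h := this
            linarith
          simp only [hudef, hvdef, hxi0]
          linarith [hz0 i]
      · exact ⟨j₀, hj₀K, huv⟩
    have claim3 : ∑ i ∈ K, v i ≤ topSum v K.card := le_topSum v hkn K rfl
    have e1 := (part1 z ⟨hz0, hzN, hzsum⟩).2 K.card hkn
    have e2 := (hzmin xstar ⟨hx0, hxN, hxsum⟩).2 K.card hkn
    simp only [← hudef, ← hvdef] at e1 e2
    linarith
  · intro i hi j hj hpi hpj
    rw [fact1 i hpi, fact1 j hpj]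
end

section
/- Fix a request sequence E = ((N_t, q_t))_{t∈[m]} with n offline nodes. Let σ : [m] → [m] be any permutation such that for every offline node i and every pair t, s ∈ Γ_i(E) with t < s, we have σ(t) < σ(s) (σ preserves the relative order of each offline node's neighborhood). Define the reordered sequence Ê = ((N̂_t, q̂_t))_{t∈[m]} with N̂_t = N_{σ^{-1}(t)} and q̂_t = q_{σ^{-1}(t)}. Then the water-filling allocations (x_t) on E and (x̂_t) on Ê satisfy x_t = x̂_{σ(t)} for all t ∈ [m], and WF(E) = WF(Ê). -/
open Finset MeasureTheory

lemma maximizer_eq {n : ℕ} {N : Finset (Fin n)} (hN : N.Nonempty) {q : ℝ}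
    {ℓ x : Fin n → ℝ} (hx : x ∈ allocSet n N q)
    (hmax : ∀ z ∈ allocSet n N q,
      N.inf' hN (fun j => z j + ℓ j) ≤ N.inf' hN (fun j => x j + ℓ j)) :
    ∀ i ∈ N, x i = max (N.inf' hN (fun j => x j + ℓ j) - ℓ i) 0 := by
  obtain ⟨hx0, hxs, hxq⟩ := hx
  set v := N.inf' hN (fun j => x j + ℓ j) with hv
  intro i hi
  have hvle : v ≤ x i + ℓ i := Finset.inf'_le _ hi
  rcases eq_or_lt_of_le (hx0 i) with h0 | hpos
  · have h1 : v - ℓ i ≤ 0 := by linarith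
    rw [← h0, max_eq_right h1]
  · have hveq : x i + ℓ i = v := by
      by_contra hne
      have hlt : v < x i + ℓ i := lt_of_le_of_ne hvle (Ne.symm hne)
      set A : Finset (Fin n) := N.filter (fun j => x j + ℓ j < x i + ℓ i) with hA
      have hiA : i ∉ A := by simp [hA]
      have hAne : A.Nonempty := by
        obtain ⟨j0, hj0, hj0v⟩ := Finset.exists_mem_eq_inf' hN (fun j => x j + ℓ j)
        have hj0v' : v = x j0 + ℓ j0 := hj0v
        exact ⟨j0, Finset.mem_filter.mpr ⟨hj0, by linarith⟩⟩
      set c : ℝ := (A.card : ℝ) with hc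
      have hc0 : 0 < c := by
        simp only [hc]
        exact_mod_cast Finset.card_pos.mpr hAne
      set ε : ℝ := min (x i) (x i + ℓ i - v) / 2 with hε
      have hε0 : 0 < ε := by
        apply div_pos _ (by norm_num)
        exact lt_min hpos (by linarith)
      have hεxi : ε ≤ x i := by
        have := min_le_left (x i) (x i + ℓ i - v); simp only [hε]; linarith
      have hεlt : ε < x i + ℓ i - v := by
        have h1 := min_le_right (x i) (x i + ℓ i - v)
        have h2 : 0 < x i + ℓ i - v := by linarith
        simp only [hε]; linarith
      set z : Fin n → ℝ := fun j => if j = i then x j - ε else if j ∈ A then x j + ε / c else x j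
        with hz
      have hzalloc : z ∈ allocSet n N q := by
        refine ⟨?_, ?_, ?_⟩
        · intro j
          simp only [hz]
          split_ifs with h1 h2
          · subst h1; linarith
          · have := hx0 j; positivity
          · exact hx0 j
        · intro j hj
          have hji : j ≠ i := fun h => hj (h ▸ hi)
          have hjA : j ∉ A := fun h => hj (Finset.mem_filter.mp h).1
          simp only [hz, if_neg hji, if_neg hjA]
          exact hxs j hj
        · have hd : ∀ j, z j - x j = if j = i then -ε else if j ∈ A then ε / c else 0 := by
            intro j; simp only [hz]; split_ifs <;> ring
          have hsum : ∑ j, (z j - x j) = 0 := by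
            rw [Finset.sum_congr rfl (fun j _ => hd j)]
            rw [← Finset.sum_subset (Finset.subset_univ (insert i A))]
            · rw [Finset.sum_insert hiA, if_pos rfl]
              rw [Finset.sum_congr rfl (fun j hj => by
                rw [if_neg (fun h : j = i => hiA (h ▸ hj)), if_pos hj])]
              rw [Finset.sum_const, nsmul_eq_mul]
              field_simp
              rw [← hc]; ring
            · intro j _ hj
              rw [Finset.mem_insert] at hj
              push_neg at hj
              rw [if_neg hj.1, if_neg hj.2]
          have : ∑ j, z j = ∑ j, x j := by
            have := Finset.sum_sub_distrib (f := z) (g := x) (s := Finset.univ) ▸ hsum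
            linarith [this]
          rw [this, hxq]
      have hgt : v < N.inf' hN (fun j => z j + ℓ j) := by
        rw [Finset.lt_inf'_iff]
        intro j hj
        simp only [hz]
        split_ifs with h1 h2
        · subst h1; linarith
        · have := (Finset.mem_filter.mp h2).2
          have hvj : v ≤ x j + ℓ j := Finset.inf'_le _ hj
          have : 0 < ε / c := div_pos hε0 hc0
          linarith
        · have : ¬ (x j + ℓ j < x i + ℓ i) := fun h => h2 (Finset.mem_filter.mpr ⟨hj, h⟩)
          push_neg at this
          linarith
      exact absurd (hmax z hzalloc) (by linarith)
    have h2 : 0 ≤ v - ℓ i := by linarith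
    rw [max_eq_left h2]; linarith

lemma maximizer_unique {n : ℕ} {N : Finset (Fin n)} (hN : N.Nonempty) {q : ℝ}
    {ℓ x y : Fin n → ℝ} (hx : x ∈ allocSet n N q) (hy : y ∈ allocSet n N q)
    (hmaxx : ∀ z ∈ allocSet n N q,
      N.inf' hN (fun j => z j + ℓ j) ≤ N.inf' hN (fun j => x j + ℓ j))
    (hmaxy : ∀ z ∈ allocSet n N q,
      N.inf' hN (fun j => z j + ℓ j) ≤ N.inf' hN (fun j => y j + ℓ j)) :
    x = y := by
  have hveq : N.inf' hN (fun j => x j + ℓ j) = N.inf' hN (fun j => y j + ℓ j) :=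
    le_antisymm (hmaxy x hx) (hmaxx y hy)
  funext i
  by_cases hi : i ∈ N
  · rw [maximizer_eq hN hx hmaxx i hi, maximizer_eq hN hy hmaxy i hi, hveq]
  · rw [hx.2.1 i hi, hy.2.1 i hi]

/-- **Proposition (Water-filling preserving permutations).** If the permutation `σ`
preserves the relative order of each offline node's neighborhood, then water-filling on
the reordered sequence `Ê` (with `N̂_t = N_{σ⁻¹(t)}`, `q̂_t = q_{σ⁻¹(t)}`) produces the
same per-node allocations up to reindexing, and `WF(E) = WF(Ê)`. -/
theorem wf_invariant_under_permutation (n m : ℕ) (E Ehat : ReqSeq n m)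
    (σ : Equiv.Perm (Fin m))
    (hσ : ∀ (i : Fin n) (t s : Fin m), i ∈ E.N t → i ∈ E.N s → t < s → σ t < σ s)
    (hN : ∀ t, Ehat.N t = E.N (σ.symm t)) (hq : ∀ t, Ehat.q t = E.q (σ.symm t))
    (x xhat : Fin m → Fin n → ℝ)
    (hx : IsWFAlloc E x) (hxhat : IsWFAlloc Ehat xhat) :
    (∀ t, x t = xhat (σ t)) ∧ (∑ t, x t = ∑ t, xhat t) := by
  obtain ⟨hxF, hxM⟩ := hx
  obtain ⟨hxhF, hxhM⟩ := hxhat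
  have hNt : ∀ t, Ehat.N (σ t) = E.N t := fun t => by rw [hN, Equiv.symm_apply_apply]
  have hqt : ∀ t, Ehat.q (σ t) = E.q t := fun t => by rw [hq, Equiv.symm_apply_apply]
  have main : ∀ k : ℕ, ∀ t : Fin m, (σ t : ℕ) < k → x t = xhat (σ t) := by
    intro k
    induction k with
    | zero => exact fun t ht => absurd ht (Nat.not_lt_zero _)
    | succ k ih =>
      intro t ht
      -- previous loads agree on `E.N t`
      have hprev : ∀ i ∈ E.N t, prevLoad xhat (σ t) i = prevLoad x t i := by
        intro i hi
        have key : ∀ s : Fin m, x s i ≠ 0 → i ∈ E.N s := by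
          intro s hsi
          by_contra h
          exact hsi ((hxF s).2.1 i h)
        unfold prevLoad
        have h1 : ∑ s ∈ Finset.univ.filter (fun s => s < σ t), xhat s i
            = ∑ s ∈ Finset.univ.filter (fun s => σ s < σ t), x s i := by
          refine (Finset.sum_equiv σ ?_ ?_).symm
          · intro a; simp
          · intro a ha
            rw [Finset.mem_filter] at ha
            rw [← ih a (by omega)]
        rw [h1]
        have h2 : ∑ s ∈ Finset.univ.filter (fun s => σ s < σ t), x s i
            = ∑ s ∈ (Finset.univ.filter (fun s => σ s < σ t)) ∩
                (Finset.univ.filter (fun s => s < t)), x s i := by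
          refine (Finset.sum_subset Finset.inter_subset_left ?_).symm
          intro s hs hns
          rw [Finset.mem_filter] at hs
          rw [Finset.mem_inter, Finset.mem_filter, Finset.mem_filter] at hns
          by_contra hxsi
          have hiNs : i ∈ E.N s := key s hxsi
          have hst : ¬ s < t := fun h => hns ⟨hs, Finset.mem_univ s, h⟩
          have hne : s ≠ t := by
            intro h; subst h; exact lt_irrefl _ hs.2
          have : t < s := lt_of_le_of_ne (not_lt.mp hst) (Ne.symm hne)
          exact absurd (hσ i t s hi hiNs this) (asymm hs.2)
        have h3 : ∑ s ∈ Finset.univ.filter (fun s => s < t), x s i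
            = ∑ s ∈ (Finset.univ.filter (fun s => σ s < σ t)) ∩
                (Finset.univ.filter (fun s => s < t)), x s i := by
          refine (Finset.sum_subset Finset.inter_subset_right ?_).symm
          intro s hs hns
          rw [Finset.mem_filter] at hs
          rw [Finset.mem_inter, Finset.mem_filter, Finset.mem_filter] at hns
          by_contra hxsi
          have hiNs : i ∈ E.N s := key s hxsi
          have hst : ¬ σ s < σ t := fun h => hns ⟨⟨Finset.mem_univ s, h⟩, hs⟩
          exact hst (hσ i s t hiNs hi hs.2)
        rw [h2, ← h3]
      -- both allocations are maximizers for the same data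
      have hne := E.N_nonempty t
      have hyalloc : xhat (σ t) ∈ allocSet n (E.N t) (E.q t) := by
        rw [← hNt t, ← hqt t]; exact hxhF (σ t)
      have hmaxx : ∀ z ∈ allocSet n (E.N t) (E.q t),
          (E.N t).inf' hne (fun j => z j + prevLoad x t j)
            ≤ (E.N t).inf' hne (fun j => x t j + prevLoad x t j) := by
        intro z hz
        exact hxM t z hz
      have hinfc : ∀ z : Fin n → ℝ,
          reqMinOn Ehat (σ t) (fun j => z j + prevLoad xhat (σ t) j)
            = (E.N t).inf' hne (fun j => z j + prevLoad x t j) := by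
        intro z
        unfold reqMinOn
        exact Finset.inf'_congr _ (hNt t) (fun a ha => by rw [hprev a (hNt t ▸ ha)])
      have hmaxy : ∀ z ∈ allocSet n (E.N t) (E.q t),
          (E.N t).inf' hne (fun j => z j + prevLoad x t j)
            ≤ (E.N t).inf' hne (fun j => xhat (σ t) j + prevLoad x t j) := by
        intro z hz
        have hz' : z ∈ allocSet n (Ehat.N (σ t)) (Ehat.q (σ t)) := by
          rw [hNt t, hqt t]; exact hz
        have := hxhM (σ t) z hz'
        rwa [hinfc z, hinfc (xhat (σ t))] at this
      exact maximizer_unique hne (hxF t) hyalloc hmaxx hmaxy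
  have hmain : ∀ t, x t = xhat (σ t) := fun t => main ((σ t : ℕ) + 1) t (Nat.lt_succ_self _)
  refine ⟨hmain, ?_⟩
  rw [Finset.sum_congr rfl (fun t _ => hmain t)]
  exact Equiv.sum_comp σ xhat
end

section
/- Let x, y ∈ ℝ^n_{≥0} with equal total sums Σ_{i∈[n]} x(i) = Σ_{i∈[n]} y(i), and suppose the prefix sums satisfy Σ_{i∈[k]} x(i) ≤ Σ_{i∈[k]} y(i) for all k ∈ [n]. Then Hx ⪰ Hy, where H ∈ ℝ^{n×n} is the matrix H(i,j) = 1{i ≥ j}/(n − j + 1). -/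
open Finset MeasureTheory

section Aux

open Finset

private lemma card_filter_le_coe (n m : ℕ) :
    (Finset.univ.filter fun i : Fin n => m ≤ (i : ℕ)).card = n - m := by
  rw [Finset.card_filter, Fin.sum_univ_eq_sum_range (fun i => if m ≤ i then 1 else 0),
    ← Finset.card_filter, Finset.range_eq_Ico, Finset.Ico_filter_le, Nat.card_Ico,
    Nat.max_eq_right (Nat.zero_le _)]

private lemma swap_sum (n : ℕ) (f : Fin n → ℝ) (A : Finset (Fin n)) :
    ∑ i ∈ A, ∑ j ∈ Finset.univ.filter (fun j => j ≤ i), f j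
      = ∑ j, ((A.filter (fun i => j ≤ i)).card : ℝ) * f j := by
  rw [Finset.sum_comm' (t' := Finset.univ) (s' := fun j => A.filter (fun i => j ≤ i))]
  · simp [Finset.sum_const, nsmul_eq_mul]
  · intro x y; simp [and_comm]

private lemma hvec_mono (n : ℕ) (ℓ : Fin n → ℝ) (hℓ : ∀ i, 0 ≤ ℓ i)
    {i i' : Fin n} (h : i ≤ i') : Hvec n ℓ i ≤ Hvec n ℓ i' := by
  unfold Hvec
  apply Finset.sum_le_sum_of_subset_of_nonneg
  · intro j hj
    simp only [Finset.mem_filter, Finset.mem_univ, true_and] at hj ⊢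
    exact le_trans hj h
  · intro j _ _
    exact div_nonneg (hℓ j) (by positivity)

private lemma hvec_nonneg (n : ℕ) (ℓ : Fin n → ℝ) (hℓ : ∀ i, 0 ≤ ℓ i) (i : Fin n) :
    0 ≤ Hvec n ℓ i := by
  unfold Hvec
  apply Finset.sum_nonneg
  intro j _
  exact div_nonneg (hℓ j) (by positivity)

private lemma hvec_total (n : ℕ) (ℓ : Fin n → ℝ) :
    ∑ i, Hvec n ℓ i = ∑ i, ℓ i := by
  unfold Hvec
  rw [swap_sum n (fun j => ℓ j / ((n - (j : ℕ) : ℕ) : ℝ)) Finset.univ]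
  apply Finset.sum_congr rfl
  intro j _
  have h1 : (Finset.univ.filter (fun i : Fin n => j ≤ i))
      = Finset.univ.filter (fun i : Fin n => (j : ℕ) ≤ (i : ℕ)) := by
    apply Finset.filter_congr; intro i _; rw [Fin.le_def]
  rw [h1, card_filter_le_coe]
  have hne : ((n - (j : ℕ) : ℕ) : ℝ) ≠ 0 :=
    Nat.cast_ne_zero.mpr (Nat.sub_ne_zero_of_lt j.isLt)
  rw [mul_comm, div_mul_cancel₀ _ hne]

private lemma hvec_topk_sum (n k : ℕ) (hk : k ≤ n) (ℓ : Fin n → ℝ) :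
    ∑ i ∈ Finset.univ.filter (fun i : Fin n => n - k ≤ (i : ℕ)), Hvec n ℓ i
      = ∑ j : Fin n, ((min k (n - (j : ℕ)) : ℕ) : ℝ) * (ℓ j / ((n - (j : ℕ) : ℕ) : ℝ)) := by
  unfold Hvec
  rw [swap_sum n (fun j => ℓ j / ((n - (j : ℕ) : ℕ) : ℝ))]
  apply Finset.sum_congr rfl
  intro j _
  congr 2
  rw [Finset.filter_filter]
  have h1 : (Finset.univ.filter (fun i : Fin n => n - k ≤ (i : ℕ) ∧ j ≤ i))
      = Finset.univ.filter (fun i : Fin n => max (n - k) (j : ℕ) ≤ (i : ℕ)) := by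
    apply Finset.filter_congr; intro i _; rw [Fin.le_def]
    constructor
    · rintro ⟨h1, h2⟩; omega
    · intro h; omega
  rw [h1, card_filter_le_coe]
  have := j.isLt
  omega

private lemma topSum_hvec (n k : ℕ) (hk : k ≤ n) (ℓ : Fin n → ℝ) (hℓ : ∀ i, 0 ≤ ℓ i) :
    topSum (Hvec n ℓ) k
      = ∑ i ∈ Finset.univ.filter (fun i : Fin n => n - k ≤ (i : ℕ)), Hvec n ℓ i := by
  classical
  set A : Finset (Fin n) := Finset.univ.filter (fun i : Fin n => n - k ≤ (i : ℕ)) with hA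
  have hAcard : A.card = k := by rw [hA, card_filter_le_coe]; omega
  have hub : ∀ s : Finset (Fin n), s.card = k
      → ∑ i ∈ s, Hvec n ℓ i ≤ ∑ i ∈ A, Hvec n ℓ i := by
    intro s hs
    rcases Nat.eq_zero_or_pos k with h0 | hkpos
    · subst h0
      rw [Finset.card_eq_zero] at hs
      subst hs
      simp only [Finset.sum_empty]
      exact Finset.sum_nonneg (fun i _ => hvec_nonneg n ℓ hℓ i)
    · have hn : 0 < n := lt_of_lt_of_le hkpos hk
      set p : Fin n := ⟨n - k, by omega⟩ with hp
      set m : ℝ := Hvec n ℓ p with hm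
      have h1 : ∀ i ∈ s \ A, Hvec n ℓ i ≤ m := by
        intro i hi
        rw [Finset.mem_sdiff, hA, Finset.mem_filter] at hi
        apply hvec_mono n ℓ hℓ
        rw [hp]
        show (i : ℕ) ≤ n - k
        simp only [Finset.mem_univ, true_and, not_le] at hi
        omega
      have h2 : ∀ i ∈ A \ s, m ≤ Hvec n ℓ i := by
        intro i hi
        rw [Finset.mem_sdiff, hA, Finset.mem_filter] at hi
        apply hvec_mono n ℓ hℓ
        rw [hp]
        show n - k ≤ (i : ℕ)
        simp only [Finset.mem_univ, true_and] at hi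
        omega
      have hcard : (s \ A).card = (A \ s).card :=
        Finset.card_sdiff_comm (by rw [hs, hAcard])
      calc ∑ i ∈ s, Hvec n ℓ i
          = ∑ i ∈ s ∩ A, Hvec n ℓ i + ∑ i ∈ s \ A, Hvec n ℓ i :=
            (Finset.sum_inter_add_sum_sdiff s A _).symm
        _ ≤ ∑ i ∈ s ∩ A, Hvec n ℓ i + (s \ A).card • m := by
            gcongr
            exact Finset.sum_le_card_nsmul _ _ _ h1
        _ = ∑ i ∈ A ∩ s, Hvec n ℓ i + (A \ s).card • m := by
            rw [Finset.inter_comm, hcard]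
        _ ≤ ∑ i ∈ A ∩ s, Hvec n ℓ i + ∑ i ∈ A \ s, Hvec n ℓ i := by
            gcongr
            exact Finset.card_nsmul_le_sum _ _ _ h2
        _ = ∑ i ∈ A, Hvec n ℓ i := Finset.sum_inter_add_sum_sdiff A s _
  have hmem : (∑ i ∈ A, Hvec n ℓ i)
      ∈ (fun s : Finset (Fin n) => ∑ i ∈ s, Hvec n ℓ i) '' {s | s.card = k} :=
    ⟨A, hAcard, rfl⟩
  unfold topSum
  apply le_antisymm
  · apply csSup_le ⟨_, hmem⟩
    rintro b ⟨s, hs, rfl⟩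
    exact hub s hs
  · exact le_csSup ((Set.toFinite _).image _).bddAbove hmem

private lemma abel_key (n : ℕ) (d x y : Fin n → ℝ)
    (hd0 : ∀ i, 0 ≤ d i)
    (hanti : ∀ i j : Fin n, i ≤ j → d j ≤ d i)
    (hpre : ∀ k : ℕ, k ≤ n →
      ∑ i ∈ Finset.univ.filter (fun i : Fin n => (i : ℕ) < k), x i ≤
      ∑ i ∈ Finset.univ.filter (fun i : Fin n => (i : ℕ) < k), y i) :
    ∑ i, d i * x i ≤ ∑ i, d i * y i := by
  classical
  rcases Nat.eq_zero_or_pos n with h0 | hn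
  · subst h0; simp
  set Z : ℕ → ℝ := fun j => if h : j < n then y ⟨j, h⟩ - x ⟨j, h⟩ else 0 with hZ
  set D : ℕ → ℝ := fun j => if h : j < n then d ⟨j, h⟩ else 0 with hD
  have hG : ∀ k, k ≤ n → 0 ≤ ∑ j ∈ Finset.range k, Z j := by
    intro k hkn
    have h2 : Finset.range k = (Finset.range n).filter (fun j => j < k) := by
      ext j; simp only [Finset.mem_range, Finset.mem_filter]; omega
    have h3 : ∑ j ∈ Finset.range k, Z j
        = ∑ i ∈ Finset.univ.filter (fun i : Fin n => (i : ℕ) < k), (y i - x i) := by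
      rw [h2, Finset.sum_filter,
        ← Fin.sum_univ_eq_sum_range (fun j => if j < k then Z j else 0),
        Finset.sum_filter]
      apply Finset.sum_congr rfl
      intro i _
      by_cases hik : (i : ℕ) < k
      · rw [if_pos hik, if_pos hik, hZ]
        simp only [dif_pos i.isLt, Fin.eta]
      · rw [if_neg hik, if_neg hik]
    rw [h3, Finset.sum_sub_distrib]
    have := hpre k hkn
    linarith
  have hparts := Finset.sum_range_by_parts D Z n
  simp only [smul_eq_mul] at hparts
  have main : 0 ≤ ∑ i ∈ Finset.range n, D i * Z i := by
    rw [hparts]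
    have t1 : 0 ≤ D (n - 1) * ∑ i ∈ Finset.range n, Z i := by
      apply mul_nonneg _ (hG n le_rfl)
      rw [hD]
      simp only
      rw [dif_pos (by omega : n - 1 < n)]
      exact hd0 _
    have t2 : ∑ i ∈ Finset.range (n - 1), (D (i + 1) - D i) * ∑ j ∈ Finset.range (i + 1), Z j ≤ 0 := by
      apply Finset.sum_nonpos
      intro i hi
      rw [Finset.mem_range] at hi
      have hi1 : i + 1 < n := by omega
      have hii : i < n := by omega
      have hdle : D (i + 1) - D i ≤ 0 := by
        rw [hD]
        simp only
        rw [dif_pos hi1, dif_pos hii]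
        have := hanti ⟨i, hii⟩ ⟨i + 1, hi1⟩ (by simp [Fin.le_def])
        linarith
      have hGpos := hG (i + 1) (by omega)
      exact mul_nonpos_of_nonpos_of_nonneg hdle hGpos
    linarith
  have hconv : ∑ i ∈ Finset.range n, D i * Z i = ∑ i : Fin n, d i * (y i - x i) := by
    rw [← Fin.sum_univ_eq_sum_range (fun j => D j * Z j)]
    apply Finset.sum_congr rfl
    intro i _
    rw [hD, hZ]
    simp only [dif_pos i.isLt, Fin.eta]
  rw [hconv] at main
  have hsplit : ∑ i : Fin n, d i * (y i - x i)
      = ∑ i, d i * y i - ∑ i, d i * x i := by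
    rw [← Finset.sum_sub_distrib]
    apply Finset.sum_congr rfl
    intro i _
    ring
  linarith [hsplit ▸ main]

end Aux

/-- **Proposition (H is a Majorizing Transform).** If `x, y ∈ ℝ^n_{≥0}` have equal total
sums and the prefix sums of `x` are dominated by those of `y`, then `Hx ⪰ Hy`. -/
theorem H_is_majorizing_transform (n : ℕ) (x y : Fin n → ℝ)
    (hx : ∀ i, 0 ≤ x i) (hy : ∀ i, 0 ≤ y i)
    (hsum : ∑ i, x i = ∑ i, y i)
    (hpre : ∀ k : ℕ, k ≤ n →
      ∑ i ∈ Finset.univ.filter (fun i : Fin n => (i : ℕ) < k), x i ≤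
      ∑ i ∈ Finset.univ.filter (fun i : Fin n => (i : ℕ) < k), y i) :
    Majorizes (Hvec n x) (Hvec n y) := by
  constructor
  · rw [hvec_total, hvec_total, hsum]
  · intro k hk
    rw [topSum_hvec n k hk x hx, topSum_hvec n k hk y hy,
      hvec_topk_sum n k hk x, hvec_topk_sum n k hk y]
    set c : Fin n → ℝ := fun j => ((min k (n - (j : ℕ)) : ℕ) : ℝ) / ((n - (j : ℕ) : ℕ) : ℝ)
      with hc
    have hrw : ∀ (ℓ : Fin n → ℝ) (j : Fin n),
        ((min k (n - (j : ℕ)) : ℕ) : ℝ) * (ℓ j / ((n - (j : ℕ) : ℕ) : ℝ)) = c j * ℓ j := by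
      intro ℓ j
      rw [hc]
      ring
    simp only [hrw]
    set d : Fin n → ℝ := fun j => 1 - c j with hd
    have hwpos : ∀ j : Fin n, (0 : ℝ) < ((n - (j : ℕ) : ℕ) : ℝ) := by
      intro j
      exact_mod_cast Nat.sub_pos_of_lt j.isLt
    have hcle : ∀ j : Fin n, c j ≤ 1 := by
      intro j
      rw [hc, div_le_one (hwpos j)]
      exact_mod_cast Nat.min_le_right _ _
    have hd0 : ∀ j, 0 ≤ d j := fun j => by have := hcle j; rw [hd]; simp only; linarith
    have hanti : ∀ i j : Fin n, i ≤ j → d j ≤ d i := by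
      intro i j hij
      have hcmono : c i ≤ c j := by
        rw [hc]
        simp only
        rw [div_le_div_iff₀ (hwpos i) (hwpos j)]
        have hkey : min k (n - (i : ℕ)) * (n - (j : ℕ)) ≤ min k (n - (j : ℕ)) * (n - (i : ℕ)) := by
          have hji : n - (i : ℕ) ≥ n - (j : ℕ) := by
            rw [Fin.le_def] at hij
            omega
          rcases le_total k (n - (j : ℕ)) with hkb | hkb
          · rw [min_eq_left hkb, min_eq_left (le_trans hkb hji)]
            exact Nat.mul_le_mul_left k hji
          · rw [min_eq_right hkb]
            calc min k (n - (i : ℕ)) * (n - (j : ℕ))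
                ≤ (n - (i : ℕ)) * (n - (j : ℕ)) :=
                  Nat.mul_le_mul_right _ (Nat.min_le_right _ _)
              _ = (n - (j : ℕ)) * (n - (i : ℕ)) := Nat.mul_comm _ _
        exact_mod_cast hkey
      rw [hd]
      simp only
      linarith
    have habel := abel_key n d x y hd0 hanti hpre
    simp only [hd, sub_mul, one_mul] at habel
    rw [Finset.sum_sub_distrib, Finset.sum_sub_distrib, hsum] at habel
    linarith
end

section
/- Let ℓ ∈ ℝ^n with 0 < ℓ(1) ≤ ℓ(2) ≤ ⋯ ≤ ℓ(n). The nested request sequence E = ((N_t, q_t))_{t∈[n]} with m = n online nodes, N_t = {t, t+1, …, n}, and q_t = ℓ(t) satisfies WF(E) = Hℓ and OPT(E) = ℓ, where H ∈ ℝ^{n×n} is the matrix H(i,j) = 1{i ≥ j}/(n − j + 1). -/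
open Finset MeasureTheory

section AuxLemmas

open Finset

lemma myCard (n a : ℕ) : (Finset.univ.filter fun i : Fin n => a ≤ (i : ℕ)).card = n - a := by
  rcases le_or_gt n a with h | h
  · rw [Nat.sub_eq_zero_of_le h, Finset.card_eq_zero]
    apply Finset.filter_eq_empty_iff.mpr
    intro i _
    have := i.isLt
    omega
  · have heq : (Finset.univ.filter fun i : Fin n => a ≤ (i : ℕ)) = Finset.Ici (⟨a, h⟩ : Fin n) := by
      ext i
      simp [Fin.le_def]
    rw [heq, Fin.card_Ici]

/-- The set of the `k` largest indices. -/
def SkSet (n k : ℕ) : Finset (Fin n) := Finset.univ.filter fun i => n - k ≤ (i : ℕ)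

lemma SkSet_card (n k : ℕ) (hk : k ≤ n) : (SkSet n k).card = k := by
  rw [SkSet, myCard]; omega

lemma topSum_ge {n : ℕ} (v : Fin n → ℝ) {s : Finset (Fin n)} {k : ℕ} (hs : s.card = k) :
    ∑ i ∈ s, v i ≤ topSum v k := by
  apply le_csSup
  · exact Set.Finite.bddAbove (Set.Finite.image _ (Set.toFinite _))
  · exact ⟨s, hs, rfl⟩

lemma topSum_eq_mono {n : ℕ} {ℓ : Fin n → ℝ} (hpos : ∀ i, 0 < ℓ i) (hmono : Monotone ℓ)
    {k : ℕ} (hk : k ≤ n) : topSum ℓ k = ∑ i ∈ SkSet n k, ℓ i := by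
  refine le_antisymm ?_ (topSum_ge ℓ (SkSet_card n k hk))
  apply csSup_le ⟨_, Set.mem_image_of_mem _ (show (SkSet n k) ∈ {s : Finset (Fin n) | s.card = k} from SkSet_card n k hk)⟩
  rintro z ⟨s, hs, rfl⟩
  simp only [Set.mem_setOf_eq] at hs
  show ∑ i ∈ s, ℓ i ≤ ∑ i ∈ SkSet n k, ℓ i
  have key : ∑ i ∈ s \ SkSet n k, ℓ i ≤ ∑ i ∈ SkSet n k \ s, ℓ i := by
    rcases (s \ SkSet n k).eq_empty_or_nonempty with he | hne
    · rw [he, Finset.sum_empty]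
      exact Finset.sum_nonneg fun i _ => (hpos i).le
    · obtain ⟨a, ha⟩ := hne
      have hamem := Finset.mem_sdiff.mp ha
      have ha2 : (a : ℕ) < n - k := by
        have := hamem.2
        simp only [SkSet, Finset.mem_filter, Finset.mem_univ, true_and, not_le] at this
        exact this
      have hk0 : k ≠ 0 := by
        rintro rfl
        rw [Finset.card_eq_zero] at hs
        rw [hs] at hamem
        exact absurd hamem.1 (Finset.notMem_empty a)
      have hnk : n - k < n := by
        have := a.isLt
        omega
      set p : Fin n := ⟨n - k, hnk⟩ with hp
      have hcard : (s \ SkSet n k).card = (SkSet n k \ s).card := by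
        have h1 := Finset.card_sdiff_add_card_inter s (SkSet n k)
        have h2 := Finset.card_sdiff_add_card_inter (SkSet n k) s
        rw [Finset.inter_comm] at h2
        have h3 := SkSet_card n k hk
        omega
      calc ∑ i ∈ s \ SkSet n k, ℓ i
          ≤ (s \ SkSet n k).card • ℓ p := by
            apply Finset.sum_le_card_nsmul
            intro i hi
            apply hmono
            have := Finset.mem_sdiff.mp hi
            have : (i : ℕ) < n - k := by
              have h := this.2
              simp only [SkSet, Finset.mem_filter, Finset.mem_univ, true_and, not_le] at h
              exact h
            rw [Fin.le_def]
            exact this.le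
        _ = (SkSet n k \ s).card • ℓ p := by rw [hcard]
        _ ≤ ∑ i ∈ SkSet n k \ s, ℓ i := by
            apply Finset.card_nsmul_le_sum
            intro i hi
            apply hmono
            have := (Finset.mem_sdiff.mp hi).1
            simp only [SkSet, Finset.mem_filter, Finset.mem_univ, true_and] at this
            rw [Fin.le_def]
            exact this
  have hsplit : ∀ u v : Finset (Fin n), ∑ i ∈ u, ℓ i = ∑ i ∈ u \ v, ℓ i + ∑ i ∈ u ∩ v, ℓ i := by
    intro u v
    rw [← Finset.sum_sdiff (Finset.inter_subset_left : u ∩ v ⊆ u), Finset.sdiff_inter_self_left]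
  rw [hsplit s (SkSet n k), hsplit (SkSet n k) s, Finset.inter_comm]
  linarith

end AuxLemmas

/-- **Observation (Existence of Worst-Case Allocation Sequences).** For any
`0 < ℓ(1) ≤ ⋯ ≤ ℓ(n)`, the complete upper-triangular sequence `E` with `m = n`,
`N_t = {t, …, n}` and `q_t = ℓ(t)` satisfies `WF(E) = Hℓ` and `OPT(E) = ℓ`. -/
theorem worst_case_sequence_exists (n : ℕ) (ℓ : Fin n → ℝ)
    (hpos : ∀ i, 0 < ℓ i) (hmono : Monotone ℓ)
    (E : ReqSeq n n)
    (hN : ∀ t : Fin n, E.N t = Finset.univ.filter (fun i => t ≤ i))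
    (hq : ∀ t, E.q t = ℓ t) :
    (∀ x : Fin n → Fin n → ℝ, IsWFAlloc E x → ∑ t, x t = Hvec n ℓ) ∧
    IsOpt E ℓ := by
  constructor
  · -- water-filling part
    intro x hx
    obtain ⟨hfeas, hopt⟩ := hx
    have hcardN : ∀ t : Fin n, (E.N t).card = n - (t : ℕ) := by
      intro t
      rw [hN t, show (Finset.univ.filter fun i : Fin n => t ≤ i)
          = Finset.univ.filter (fun i : Fin n => (t : ℕ) ≤ (i : ℕ)) from by
        apply Finset.filter_congr; intro i _; exact Fin.le_def, myCard]
    have hdenom : ∀ t : Fin n, ((n - (t : ℕ) : ℕ) : ℝ) ≠ 0 := by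
      intro t
      have := t.isLt
      exact_mod_cast (by omega : (n - (t : ℕ) : ℕ) ≠ 0)
    have keyM : ∀ M : ℕ, ∀ t : Fin n, (t : ℕ) < M → ∀ i,
        x t i = if t ≤ i then ℓ t / ((n - (t : ℕ) : ℕ) : ℝ) else 0 := by
      intro M
      induction M with
      | zero => intro t ht; omega
      | succ M IHM =>
        intro t ht i
        have IH : ∀ s : Fin n, s < t → ∀ i,
            x s i = if s ≤ i then ℓ s / ((n - (s : ℕ) : ℕ) : ℝ) else 0 := by
          intro s hs
          exact IHM s (by have : (s : ℕ) < (t : ℕ) := hs; omega)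
        set a : ℝ := ℓ t / ((n - (t : ℕ) : ℕ) : ℝ) with ha
        set c : ℝ := ∑ s ∈ Finset.univ.filter (fun s => s < t),
            ℓ s / ((n - (s : ℕ) : ℕ) : ℝ) with hc
        have hprev : ∀ j ∈ E.N t, prevLoad x t j = c := by
          intro j hj
          rw [hN t, Finset.mem_filter] at hj
          unfold prevLoad
          apply Finset.sum_congr rfl
          intro s hs
          rw [Finset.mem_filter] at hs
          rw [IH s hs.2 j, if_pos (le_trans hs.2.le hj.2)]
        have htmem : t ∈ E.N t := by rw [hN t]; simp
        have ha_pos : 0 ≤ a := by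
          apply div_nonneg (hpos t).le
          positivity
        set y : Fin n → ℝ := fun i => if t ≤ i then a else 0 with hy
        have hysum : ∑ i, y i = ℓ t := by
          show ∑ i, (if t ≤ i then a else 0) = ℓ t
          rw [← Finset.sum_filter, Finset.sum_const, ← hN t, hcardN t, nsmul_eq_mul, ha,
            mul_div_cancel₀ _ (hdenom t)]
        have hyalloc : y ∈ allocSet n (E.N t) (E.q t) := by
          refine ⟨?_, ?_, ?_⟩
          · intro i
            show 0 ≤ if t ≤ i then a else 0
            split
            · exact ha_pos
            · exact le_rfl
          · intro i hi
            rw [hN t] at hi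
            simp only [Finset.mem_filter, Finset.mem_univ, true_and, not_le] at hi
            show (if t ≤ i then a else 0) = 0
            rw [if_neg (not_le.mpr hi)]
          · rw [hq t]; exact hysum
        have hminy : reqMinOn E t (fun i => y i + prevLoad x t i) = a + c := by
          unfold reqMinOn
          apply le_antisymm
          · refine le_trans (Finset.inf'_le _ htmem) ?_
            show y t + prevLoad x t t ≤ a + c
            rw [hprev t htmem, show y t = a from if_pos le_rfl]
          · apply Finset.le_inf'
            intro j hj
            have htj : t ≤ j := by
              rw [hN t, Finset.mem_filter] at hj
              exact hj.2
            show a + c ≤ y j + prevLoad x t j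
            rw [hprev j hj, show y j = a from if_pos htj]
        have hlb : ∀ j ∈ E.N t, a ≤ x t j := by
          intro j hj
          have h1 := hopt t y hyalloc
          rw [hminy] at h1
          have h2 : reqMinOn E t (fun i => x t i + prevLoad x t i) ≤ x t j + prevLoad x t j :=
            Finset.inf'_le _ hj
          have h3 := hprev j hj
          unfold reqMinOn at h1 h2
          linarith
        have hsumN : ∑ j ∈ E.N t, x t j = ℓ t := by
          obtain ⟨hx0, hxz, hxs⟩ := hfeas t
          rw [← hq t, ← hxs]
          exact Finset.sum_subset (Finset.subset_univ _) (fun j _ hj => hxz j hj)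
        have heq : ∀ j ∈ E.N t, x t j = a := by
          have h0 : ∑ j ∈ E.N t, (x t j - a) = 0 := by
            rw [Finset.sum_sub_distrib, hsumN, Finset.sum_const, hcardN t, nsmul_eq_mul, ha,
              mul_div_cancel₀ _ (hdenom t), sub_self]
          intro j hj
          have := (Finset.sum_eq_zero_iff_of_nonneg
            (fun j hj => sub_nonneg.mpr (hlb j hj))).mp h0 j hj
          linarith
        by_cases hti : t ≤ i
        · rw [if_pos hti]
          exact heq i (by rw [hN t]; simp [hti])
        · rw [if_neg hti]
          exact (hfeas t).2.1 i (by rw [hN t]; simp [hti])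
    have key : ∀ t : Fin n, ∀ i,
        x t i = if t ≤ i then ℓ t / ((n - (t : ℕ) : ℕ) : ℝ) else 0 :=
      fun t => keyM n t t.isLt
    funext i
    rw [Finset.sum_apply]
    unfold Hvec
    rw [Finset.sum_filter]
    apply Finset.sum_congr rfl
    intro t _
    exact key t i
  · -- optimality part
    constructor
    · refine ⟨fun t i => if i = t then ℓ t else 0, ?_, ?_⟩
      · intro t
        refine ⟨?_, ?_, ?_⟩
        · intro i
          show 0 ≤ if i = t then ℓ t else 0
          split
          · exact (hpos t).le
          · exact le_rfl
        · intro i hi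
          rw [hN t] at hi
          simp only [Finset.mem_filter, Finset.mem_univ, true_and, not_le] at hi
          show (if i = t then ℓ t else 0) = 0
          rw [if_neg (ne_of_lt hi)]
        · rw [hq t]
          show (∑ i, if i = t then ℓ t else 0) = ℓ t
          simp
      · funext i
        simp [Finset.sum_apply]
    · rintro ℓ' ⟨x, hxf, rfl⟩
      have hnn : ∀ t i, 0 ≤ x t i := fun t i => (hxf t).1 i
      have hzero : ∀ t i, ¬(t ≤ i) → x t i = 0 := by
        intro t i h
        apply (hxf t).2.1
        rw [hN t]
        simp [h]
      have hsum_t : ∀ t, ∑ i, x t i = ℓ t := fun t => (hxf t).2.2.trans (hq t)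
      constructor
      · rw [show ∑ i, (∑ t, x t) i = ∑ i, ∑ t, x t i from by
          apply Finset.sum_congr rfl; intros; rw [Finset.sum_apply],
          Finset.sum_comm]
        apply Finset.sum_congr rfl
        intro t _
        exact hsum_t t
      · intro k hk
        rw [topSum_eq_mono hpos hmono hk]
        refine le_trans ?_ (topSum_ge _ (SkSet_card n k hk))
        have h1 : ∀ t ∈ SkSet n k, ℓ t = ∑ i ∈ SkSet n k, x t i := by
          intro t ht
          rw [← hsum_t t]
          symm
          apply Finset.sum_subset (Finset.subset_univ _)
          intro i _ hi
          apply hzero t i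
          intro hle
          rw [Fin.le_def] at hle
          simp only [SkSet, Finset.mem_filter, Finset.mem_univ, true_and, not_le] at hi ht
          omega
        rw [Finset.sum_congr rfl h1]
        refine le_trans (Finset.sum_le_sum_of_subset_of_nonneg (Finset.subset_univ _)
          (fun t _ _ => Finset.sum_nonneg fun i _ => hnn t i)) ?_
        rw [Finset.sum_comm]
        apply le_of_eq
        apply Finset.sum_congr rfl
        intros i _
        rw [Finset.sum_apply]
end
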